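/- arXiv:2205.04866 — 5 statements merged into one kernel-verified Lean document; each statement's English description precedes it below -/
import Mathlib

section
/- For all natural numbers r, s there is an isomorphism of ℝ-algebras Cl(r+1, s+1) ≅ Cl(r, s) ⊗_ℝ M₂(ℝ), where Cl(r,s) denotes the Clifford algebra of the quadratic form Q_{r,s} and M₂(ℝ) is the algebra of 2×2 real matrices. -/
open scoped TensorProduct
open CliffordAlgebra

/-- The quadratic form of signature `(r, s)` (`r` pluses, `s` minuses) on `ℝ^(r+s)`. -/
noncomputable def Qform (r s : ℕ) : QuadraticForm ℝ (Fin (r + s) → ℝ) :=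
  QuadraticMap.weightedSumSquares ℝ (fun i : Fin (r + s) => if (i : ℕ) < r then (1 : ℝ) else -1)

namespace ClSS

/-- the split form a² - b² on ℝ × ℝ -/
noncomputable def Q2 : QuadraticForm ℝ (ℝ × ℝ) := CliffordAlgebraQuaternion.Q 1 (-1)

@[simp] theorem Q2_apply (v : ℝ × ℝ) : Q2 v = v.1 * v.1 - v.2 * v.2 := by
  simp [Q2, CliffordAlgebraQuaternion.Q_apply]; ring

def A : Matrix (Fin 2) (Fin 2) ℝ := !![1, 0; 0, -1]
def B : Matrix (Fin 2) (Fin 2) ℝ := !![0, 1; -1, 0]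

noncomputable def g : (ℝ × ℝ) →ₗ[ℝ] Matrix (Fin 2) (Fin 2) ℝ :=
  (LinearMap.toSpanSingleton ℝ _ A).coprod (LinearMap.toSpanSingleton ℝ _ B)

@[simp] theorem g_apply (v : ℝ × ℝ) : g v = v.1 • A + v.2 • B := rfl

theorem g_sq (v : ℝ × ℝ) : g v * g v = algebraMap ℝ _ (Q2 v) := by
  ext i j
  fin_cases i <;> fin_cases j <;>
    simp [A, B, Matrix.mul_apply, Fin.sum_univ_succ, Matrix.algebraMap_matrix_apply] <;> ring

noncomputable def θ : CliffordAlgebra Q2 →ₐ[ℝ] Matrix (Fin 2) (Fin 2) ℝ :=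
  CliffordAlgebra.lift Q2 ⟨g, g_sq⟩

@[simp] theorem θ_ι (v : ℝ × ℝ) : θ (ι Q2 v) = v.1 • A + v.2 • B := by
  simp [θ]

end ClSS
namespace ClSS

noncomputable def v₁ : CliffordAlgebra Q2 := ι Q2 (1, 0)
noncomputable def v₂ : CliffordAlgebra Q2 := ι Q2 (0, 1)

theorem v₁_sq : v₁ * v₁ = 1 := by
  rw [v₁, ι_sq_scalar]; norm_num

theorem v₂_sq : v₂ * v₂ = -1 := by
  rw [v₂, ι_sq_scalar]
  simp only [Q2_apply]
  norm_num

theorem v₂_mul_v₁ : v₂ * v₁ = -(v₁ * v₂) := by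
  rw [v₂, v₁, ι_mul_ι_comm_of_isOrtho]
  rw [QuadraticMap.IsOrtho]
  norm_num

@[simp] theorem θ_v₁ : θ v₁ = A := by simp [v₁]
@[simp] theorem θ_v₂ : θ v₂ = B := by simp [v₂]

end ClSS
namespace ClSS

open Submodule in
theorem span_eq_top :
    span ℝ ({1, v₁, v₂, v₁ * v₂} : Set (CliffordAlgebra Q2)) = ⊤ := by
  have m11 : v₁ * (v₁ * v₂) = v₂ := by rw [← mul_assoc, v₁_sq, one_mul]
  have m21 : v₂ * v₁ = -(v₁ * v₂) := v₂_mul_v₁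
  have m212 : v₂ * (v₁ * v₂) = v₁ := by
    rw [← mul_assoc, v₂_mul_v₁, neg_mul, mul_assoc, v₂_sq, mul_neg, mul_one, neg_neg]
  have m121 : (v₁ * v₂) * v₁ = -v₂ := by
    rw [mul_assoc, v₂_mul_v₁, mul_neg, ← mul_assoc, v₁_sq, one_mul]
  have m122 : (v₁ * v₂) * v₂ = -v₁ := by
    rw [mul_assoc, v₂_sq, mul_neg, mul_one]
  have m1212 : (v₁ * v₂) * (v₁ * v₂) = 1 := by
    rw [mul_assoc, m212, v₁_sq]
  rw [eq_top_iff]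
  rintro x -
  set S := span ℝ ({1, v₁, v₂, v₁ * v₂} : Set (CliffordAlgebra Q2)) with hS
  have h1 : (1 : CliffordAlgebra Q2) ∈ S := subset_span (by simp)
  have hv₁ : v₁ ∈ S := subset_span (by simp)
  have hv₂ : v₂ ∈ S := subset_span (by simp)
  have hv₁₂ : v₁ * v₂ ∈ S := subset_span (by simp)
  have hmul : ∀ a ∈ S, ∀ b ∈ S, a * b ∈ S := by
    intro a ha b hb
    induction ha using Submodule.span_induction with
    | smul r a _ ih => rw [smul_mul_assoc]; exact S.smul_mem r ih
    | add a a' _ _ iha iha' => rw [add_mul]; exact S.add_mem iha iha'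
    | zero => rw [zero_mul]; exact S.zero_mem
    | mem a ha =>
      induction hb using Submodule.span_induction with
      | smul r b _ ih => rw [mul_smul_comm]; exact S.smul_mem r ih
      | add b b' _ _ ihb ihb' => rw [mul_add]; exact S.add_mem ihb ihb'
      | zero => rw [mul_zero]; exact S.zero_mem
      | mem b hb =>
        simp only [Set.mem_insert_iff, Set.mem_singleton_iff] at ha hb
        obtain rfl | rfl | rfl | rfl := ha <;> obtain rfl | rfl | rfl | rfl := hb <;>
          try simp only [one_mul, mul_one, v₁_sq, v₂_sq, m11, m21, m212, m121, m122, m1212]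
        all_goals
          first
          | exact h1 | exact hv₁ | exact hv₂ | exact hv₁₂
          | exact S.neg_mem h1 | exact S.neg_mem hv₁ | exact S.neg_mem hv₂
          | exact S.neg_mem hv₁₂
  induction x using CliffordAlgebra.induction with
  | algebraMap r =>
    rw [Algebra.algebraMap_eq_smul_one]; exact S.smul_mem r h1
  | ι m =>
    have : ι Q2 m = m.1 • v₁ + m.2 • v₂ := by
      rw [v₁, v₂, ← map_smul, ← map_smul, ← map_add]
      congr 1
      simp [Prod.ext_iff]
    rw [this]
    exact S.add_mem (S.smul_mem _ hv₁) (S.smul_mem _ hv₂)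
  | mul a b iha ihb => exact hmul a iha b ihb
  | add a b iha ihb => exact S.add_mem iha ihb

end ClSS
namespace ClSS

noncomputable def θ' : Matrix (Fin 2) (Fin 2) ℝ →ₗ[ℝ] CliffordAlgebra Q2 where
  toFun M := ((M 0 0 + M 1 1) / 2) • 1 + ((M 0 0 - M 1 1) / 2) • v₁
    + ((M 0 1 - M 1 0) / 2) • v₂ + ((M 0 1 + M 1 0) / 2) • (v₁ * v₂)
  map_add' M N := by
    simp only [Matrix.add_apply]
    module
  map_smul' r M := by
    simp only [Matrix.smul_apply, smul_eq_mul, RingHom.id_apply]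
    module

@[simp] theorem θ'_apply (M : Matrix (Fin 2) (Fin 2) ℝ) :
    θ' M = ((M 0 0 + M 1 1) / 2) • 1 + ((M 0 0 - M 1 1) / 2) • v₁
    + ((M 0 1 - M 1 0) / 2) • v₂ + ((M 0 1 + M 1 0) / 2) • (v₁ * v₂) := rfl

theorem θ'_θ (x : CliffordAlgebra Q2) : θ' (θ x) = x := by
  have : x ∈ Submodule.span ℝ ({1, v₁, v₂, v₁ * v₂} : Set (CliffordAlgebra Q2)) := by
    rw [span_eq_top]; trivial
  induction this using Submodule.span_induction with
  | smul r a _ ih => rw [map_smul, map_smul, ih]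
  | add a b _ _ iha ihb => rw [map_add, map_add, iha, ihb]
  | zero => rw [map_zero, map_zero]
  | mem a ha =>
    have hAB : A * B = !![0,1;1,0] := by
      ext i j; fin_cases i <;> fin_cases j <;> simp [A, B, Matrix.mul_apply, Fin.sum_univ_succ]
    simp only [Set.mem_insert_iff, Set.mem_singleton_iff] at ha
    obtain rfl | rfl | rfl | rfl := ha
    · rw [map_one, θ'_apply]
      norm_num [Matrix.one_apply]
    · rw [θ_v₁, θ'_apply]
      norm_num [A]
    · rw [θ_v₂, θ'_apply]
      norm_num [B]
    · rw [map_mul, θ_v₁, θ_v₂, hAB, θ'_apply]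
      norm_num

theorem θ_surj : Function.Surjective θ := by
  intro M
  refine ⟨((M 0 0 + M 1 1) / 2) • 1 + ((M 0 0 - M 1 1) / 2) • v₁
    + ((M 0 1 - M 1 0) / 2) • v₂ + ((M 0 1 + M 1 0) / 2) • (v₁ * v₂), ?_⟩
  have hAB : A * B = !![0,1;1,0] := by
    ext i j; fin_cases i <;> fin_cases j <;> simp [A, B, Matrix.mul_apply, Fin.sum_univ_succ]
  simp only [map_add, map_smul, map_one, map_mul, θ_v₁, θ_v₂, hAB]
  ext i j
  fin_cases i <;> fin_cases j <;>
    simp [A, B, Matrix.one_apply] <;> ring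

noncomputable def θe : CliffordAlgebra Q2 ≃ₐ[ℝ] Matrix (Fin 2) (Fin 2) ℝ :=
  AlgEquiv.ofBijective θ ⟨Function.LeftInverse.injective θ'_θ, θ_surj⟩

@[simp] theorem θe_symm_A : θe.symm A = v₁ := by
  rw [show A = θe v₁ from (θ_v₁).symm]; exact θe.symm_apply_apply v₁

@[simp] theorem θe_symm_B : θe.symm B = v₂ := by
  rw [show B = θe v₂ from (θ_v₂).symm]; exact θe.symm_apply_apply v₂

end ClSS
namespace ClSS

variable {M : Type*} [AddCommGroup M] [Module ℝ M] (Q : QuadraticForm ℝ M)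

local notation "Q'" => Q.prod Q2

noncomputable def pp : CliffordAlgebra Q' := ι Q' (0, (1, 0))
noncomputable def qq : CliffordAlgebra Q' := ι Q' (0, (0, 1))
noncomputable def uu (m : M) : CliffordAlgebra Q' := ι Q' (m, 0)

theorem pp_sq : pp Q * pp Q = 1 := by
  rw [pp, ι_sq_scalar]
  simp [QuadraticMap.prod_apply]

theorem qq_sq : qq Q * qq Q = -1 := by
  rw [qq, ι_sq_scalar]
  simp [QuadraticMap.prod_apply]

theorem qq_pp : qq Q * pp Q = -(pp Q * qq Q) := by
  rw [qq, pp, ι_mul_ι_comm_of_isOrtho]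
  rw [QuadraticMap.IsOrtho]
  simp [QuadraticMap.prod_apply]

theorem pp_uu (m : M) : pp Q * uu Q m = -(uu Q m * pp Q) := by
  rw [pp, uu, ι_mul_ι_comm_of_isOrtho]
  rw [QuadraticMap.IsOrtho]
  simp [QuadraticMap.prod_apply]
  ring

theorem qq_uu (m : M) : qq Q * uu Q m = -(uu Q m * qq Q) := by
  rw [qq, uu, ι_mul_ι_comm_of_isOrtho]
  rw [QuadraticMap.IsOrtho]
  simp [QuadraticMap.prod_apply]
  ring

theorem uu_sq (m : M) : uu Q m * uu Q m = algebraMap ℝ _ (Q m) := by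
  rw [uu, ι_sq_scalar]
  simp [QuadraticMap.prod_apply]

theorem uu_zero : uu Q 0 = 0 := by
  have h : ((0 : M), (0 : ℝ × ℝ)) = (0 : M × (ℝ × ℝ)) := rfl
  rw [uu, h, map_zero]

theorem ι_prod_decomp (m : M) (a b : ℝ) :
    ι Q' (m, (a, b)) = uu Q m + a • pp Q + b • qq Q := by
  rw [uu, pp, qq, ← map_smul, ← map_smul, ← map_add, ← map_add]
  congr 1
  simp [Prod.ext_iff]

end ClSS
namespace ClSS

section matlemmas
set_option maxHeartbeats 800000

noncomputable def Cm : Matrix (Fin 2) (Fin 2) ℝ := A * B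

theorem Cm_eq : Cm = !![0,1;1,0] := by
  ext i j; fin_cases i <;> fin_cases j <;> simp [Cm, A, B, Matrix.mul_apply, Fin.sum_univ_succ]

theorem Cm_sq : Cm * Cm = 1 := by
  rw [Cm_eq]; ext i j; fin_cases i <;> fin_cases j <;>
    simp [Matrix.mul_apply, Fin.sum_univ_succ, Matrix.one_apply]

theorem Cm_anti (v : ℝ × ℝ) : Cm * g v + g v * Cm = 0 := by
  rw [Cm_eq]; ext i j; fin_cases i <;> fin_cases j <;>
    simp [A, B, Matrix.mul_apply, Fin.sum_univ_succ]

theorem Cm_mul_A_mul_B : Cm * A * B = 1 := by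
  rw [Cm_eq]; ext i j; fin_cases i <;> fin_cases j <;>
    simp [A, B, Matrix.mul_apply, Fin.sum_univ_succ, Matrix.one_apply]

end matlemmas

variable {M : Type*} [AddCommGroup M] [Module ℝ M] (Q : QuadraticForm ℝ M)

local notation "Q'" => Q.prod Q2
local notation "M₂" => Matrix (Fin 2) (Fin 2) ℝ

noncomputable def fmap : (M × (ℝ × ℝ)) →ₗ[ℝ] (CliffordAlgebra Q ⊗[ℝ] M₂) :=
  LinearMap.coprod
    (((TensorProduct.mk ℝ (CliffordAlgebra Q) M₂).flip Cm).comp (ι Q))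
    ((Algebra.TensorProduct.includeRight : M₂ →ₐ[ℝ] _).toLinearMap.comp g)

@[simp] theorem fmap_apply (x : M × (ℝ × ℝ)) :
    fmap Q x = ι Q x.1 ⊗ₜ Cm + 1 ⊗ₜ g x.2 := rfl

set_option synthInstance.maxHeartbeats 400000 in
set_option maxHeartbeats 800000 in
theorem fmap_sq (x : M × (ℝ × ℝ)) :
    fmap Q x * fmap Q x = algebraMap ℝ _ (Q' x) := by
  obtain ⟨m, v⟩ := x
  rw [fmap_apply]
  simp only [add_mul, mul_add, Algebra.TensorProduct.tmul_mul_tmul, one_mul, mul_one]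
  rw [ι_sq_scalar, Cm_sq, g_sq]
  have hcross : (ι Q m) ⊗ₜ[ℝ] (Cm * g v) + (ι Q m) ⊗ₜ[ℝ] (g v * Cm) = 0 := by
    rw [← TensorProduct.tmul_add, Cm_anti, TensorProduct.tmul_zero]
  have h2 : (ι Q m) ⊗ₜ[ℝ] (g v * Cm) = -((ι Q m) ⊗ₜ[ℝ] (Cm * g v)) :=
    eq_neg_of_add_eq_zero_right hcross
  rw [h2, add_assoc, neg_add_cancel_left]
  rw [QuadraticMap.prod_apply, map_add]
  rw [Algebra.TensorProduct.algebraMap_apply, Algebra.TensorProduct.algebraMap_apply]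
  congr 1
  rw [Algebra.algebraMap_eq_smul_one (A := M₂), Algebra.algebraMap_eq_smul_one (R := ℝ)
    (A := CliffordAlgebra Q), TensorProduct.smul_tmul]

noncomputable def φ : CliffordAlgebra Q' →ₐ[ℝ] (CliffordAlgebra Q ⊗[ℝ] M₂) :=
  CliffordAlgebra.lift Q' ⟨fmap Q, fmap_sq Q⟩

@[simp] theorem φ_ι (x : M × (ℝ × ℝ)) :
    φ Q (ι Q' x) = ι Q x.1 ⊗ₜ Cm + 1 ⊗ₜ g x.2 := by
  simp only [φ, CliffordAlgebra.lift_ι_apply, fmap_apply]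

end ClSS
namespace ClSS

variable {M : Type*} [AddCommGroup M] [Module ℝ M] (Q : QuadraticForm ℝ M)

local notation "Q'" => Q.prod Q2
local notation "M₂" => Matrix (Fin 2) (Fin 2) ℝ

theorem pq_mul_uu (m : M) : (pp Q * qq Q) * uu Q m = uu Q m * (pp Q * qq Q) := by
  rw [mul_assoc, qq_uu, mul_neg, ← mul_assoc, pp_uu, neg_mul, neg_neg, mul_assoc]

theorem pq_mul_pp : (pp Q * qq Q) * pp Q = -qq Q := by
  rw [mul_assoc, qq_pp, mul_neg, ← mul_assoc, pp_sq, one_mul]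

theorem pq_mul_pq : (pp Q * qq Q) * (pp Q * qq Q) = 1 := by
  rw [← mul_assoc, pq_mul_pp, neg_mul, qq_sq, neg_neg]

theorem upq_sq (m : M) :
    (uu Q m * (pp Q * qq Q)) * (uu Q m * (pp Q * qq Q)) = algebraMap ℝ _ (Q m) := by
  rw [mul_assoc, ← mul_assoc (pp Q * qq Q), pq_mul_uu, mul_assoc, pq_mul_pq, mul_one]
  exact uu_sq Q m

noncomputable def ψ₁ : CliffordAlgebra Q →ₐ[ℝ] CliffordAlgebra Q' :=
  CliffordAlgebra.lift Q
    ⟨(LinearMap.mulRight ℝ (pp Q * qq Q)).comp ((ι Q').comp (LinearMap.inl ℝ M (ℝ × ℝ))),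
     fun m => upq_sq Q m⟩

@[simp] theorem ψ₁_ι (m : M) : ψ₁ Q (ι Q m) = uu Q m * (pp Q * qq Q) := by
  simp only [ψ₁, CliffordAlgebra.lift_ι_apply, LinearMap.comp_apply, LinearMap.inl_apply,
    LinearMap.mulRight_apply]
  exact CliffordAlgebra.lift_ι_apply _ _ m

noncomputable def incl : CliffordAlgebra Q2 →ₐ[ℝ] CliffordAlgebra Q' :=
  CliffordAlgebra.map (QuadraticMap.Isometry.inr Q Q2)

@[simp] theorem incl_ι (e : ℝ × ℝ) : incl Q (ι Q2 e) = ι Q' (0, e) := by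
  rw [incl, CliffordAlgebra.map_apply_ι]
  rfl

theorem incl_v₁ : incl Q v₁ = pp Q := incl_ι Q (1, 0)
theorem incl_v₂ : incl Q v₂ = qq Q := incl_ι Q (0, 1)

noncomputable def ψ₂ : M₂ →ₐ[ℝ] CliffordAlgebra Q' :=
  (incl Q).comp θe.symm.toAlgHom

theorem upq_comm_pp (m : M) : Commute (uu Q m * (pp Q * qq Q)) (pp Q) := by
  unfold Commute SemiconjBy
  calc uu Q m * (pp Q * qq Q) * pp Q
      = uu Q m * ((pp Q * qq Q) * pp Q) := by rw [mul_assoc]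
    _ = -(uu Q m * qq Q) := by rw [pq_mul_pp, mul_neg]
    _ = -(uu Q m * ((pp Q * pp Q) * qq Q)) := by rw [pp_sq, one_mul]
    _ = -((uu Q m * pp Q) * (pp Q * qq Q)) := by rw [mul_assoc, mul_assoc]
    _ = pp Q * (uu Q m * (pp Q * qq Q)) := by
        rw [← neg_mul, ← pp_uu, mul_assoc]

theorem upq_comm_qq (m : M) : Commute (uu Q m * (pp Q * qq Q)) (qq Q) := by
  unfold Commute SemiconjBy
  have h1 : qq Q * (pp Q * qq Q) = pp Q := by
    rw [← mul_assoc, qq_pp, neg_mul, mul_assoc, qq_sq, mul_neg, mul_one, neg_neg]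
  calc uu Q m * (pp Q * qq Q) * qq Q
      = uu Q m * (pp Q * (qq Q * qq Q)) := by rw [mul_assoc, mul_assoc]
    _ = -(uu Q m * pp Q) := by rw [qq_sq, mul_neg_one, mul_neg]
    _ = -(uu Q m * (qq Q * (pp Q * qq Q))) := by rw [h1]
    _ = -((uu Q m * qq Q) * (pp Q * qq Q)) := by rw [mul_assoc]
    _ = qq Q * (uu Q m * (pp Q * qq Q)) := by
        rw [← neg_mul, ← qq_uu, mul_assoc]

theorem hcomm : ∀ (x : CliffordAlgebra Q) (y : M₂),
    Commute (ψ₁ Q x) (ψ₂ Q y) := by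
  have key : ∀ (x : CliffordAlgebra Q) (c : CliffordAlgebra Q2),
      Commute (ψ₁ Q x) (incl Q c) := by
    intro x
    induction x using CliffordAlgebra.induction with
    | algebraMap r =>
      intro c
      rw [AlgHom.commutes]
      exact Algebra.commute_algebraMap_left r _
    | add a b iha ihb =>
      intro c
      rw [map_add]
      exact (iha c).add_left (ihb c)
    | mul a b iha ihb =>
      intro c
      rw [map_mul]
      exact (iha c).mul_left (ihb c)
    | ι m =>
      intro c
      induction c using CliffordAlgebra.induction with
      | algebraMap r => rw [AlgHom.commutes]; exact Algebra.commute_algebraMap_right r _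
      | add a b iha ihb => rw [map_add]; exact iha.add_right ihb
      | mul a b iha ihb => rw [map_mul]; exact iha.mul_right ihb
      | ι e =>
        rw [incl_ι, ψ₁_ι, ι_prod_decomp, uu_zero, zero_add]
        exact ((upq_comm_pp Q m).smul_right e.1).add_right ((upq_comm_qq Q m).smul_right e.2)
  intro x y
  exact key x (θe.symm y)

noncomputable def ψ : (CliffordAlgebra Q ⊗[ℝ] M₂) →ₐ[ℝ] CliffordAlgebra Q' :=
  Algebra.TensorProduct.lift (ψ₁ Q) (ψ₂ Q) (hcomm Q)

end ClSS
namespace ClSS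

@[simp] theorem θe_apply (x : CliffordAlgebra Q2) : θe x = θ x := rfl

variable {M : Type*} [AddCommGroup M] [Module ℝ M] (Q : QuadraticForm ℝ M)

local notation "Q'" => Q.prod Q2
local notation "M₂" => Matrix (Fin 2) (Fin 2) ℝ

theorem ψ₂_A : ψ₂ Q A = pp Q := by
  rw [ψ₂, AlgHom.comp_apply]
  show incl Q (θe.symm A) = pp Q
  rw [θe_symm_A, incl_v₁]

theorem ψ₂_B : ψ₂ Q B = qq Q := by
  rw [ψ₂, AlgHom.comp_apply]
  show incl Q (θe.symm B) = qq Q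
  rw [θe_symm_B, incl_v₂]

theorem ψ₂_Cm : ψ₂ Q Cm = pp Q * qq Q := by
  show ψ₂ Q (A * B) = _
  rw [map_mul, ψ₂_A, ψ₂_B]

theorem ψ₂_g (v : ℝ × ℝ) : ψ₂ Q (g v) = v.1 • pp Q + v.2 • qq Q := by
  rw [g_apply, map_add, map_smul, map_smul, ψ₂_A, ψ₂_B]

theorem ψ_comp_φ : (ψ Q).comp (φ Q) = AlgHom.id ℝ _ := by
  apply CliffordAlgebra.hom_ext
  apply LinearMap.ext
  intro x
  obtain ⟨m, v⟩ := x
  simp only [LinearMap.comp_apply, AlgHom.toLinearMap_apply, AlgHom.coe_id, id_eq]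
  rw [AlgHom.comp_apply, φ_ι, map_add]
  rw [show (ψ Q) ((ι Q m) ⊗ₜ[ℝ] Cm) = ψ₁ Q (ι Q m) * ψ₂ Q Cm from
    Algebra.TensorProduct.lift_tmul ..]
  rw [show (ψ Q) ((1 : CliffordAlgebra Q) ⊗ₜ[ℝ] g v) = ψ₁ Q 1 * ψ₂ Q (g v) from
    Algebra.TensorProduct.lift_tmul ..]
  rw [map_one, one_mul, ψ₂_Cm, ψ₂_g, ψ₁_ι, mul_assoc, pq_mul_pq, mul_one, ι_prod_decomp,
    add_assoc]

theorem φ_comp_ψ₁ : (φ Q).comp (ψ₁ Q) =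
    (Algebra.TensorProduct.includeLeft : CliffordAlgebra Q →ₐ[ℝ] _) := by
  apply CliffordAlgebra.hom_ext
  apply LinearMap.ext
  intro m
  simp only [LinearMap.comp_apply, AlgHom.toLinearMap_apply, AlgHom.comp_apply, ψ₁_ι]
  rw [map_mul, map_mul]
  have hu : φ Q (uu Q m) = ι Q m ⊗ₜ[ℝ] Cm := by
    rw [uu, φ_ι]
    simp only [g_apply]
    norm_num
  have hp : φ Q (pp Q) = 1 ⊗ₜ[ℝ] A := by
    rw [pp, φ_ι]
    simp only [g_apply, map_zero, TensorProduct.zero_tmul]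
    norm_num
  have hq : φ Q (qq Q) = 1 ⊗ₜ[ℝ] B := by
    rw [qq, φ_ι]
    simp only [g_apply, map_zero, TensorProduct.zero_tmul]
    norm_num
  rw [hu, hp, hq, Algebra.TensorProduct.tmul_mul_tmul, Algebra.TensorProduct.tmul_mul_tmul,
    one_mul, mul_one]
  rw [show A * B = Cm from rfl, Cm_sq]
  rfl

theorem φ_incl (c : CliffordAlgebra Q2) : φ Q (incl Q c) = 1 ⊗ₜ[ℝ] θ c := by
  have h : (φ Q).comp (incl Q) =
      (Algebra.TensorProduct.includeRight : _ →ₐ[ℝ] CliffordAlgebra Q ⊗[ℝ] M₂).comp θ := by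
    apply CliffordAlgebra.hom_ext
    apply LinearMap.ext
    intro e
    simp only [LinearMap.comp_apply, AlgHom.toLinearMap_apply, AlgHom.comp_apply, incl_ι, φ_ι,
      θ_ι]
    rw [map_zero, TensorProduct.zero_tmul, zero_add]
    rfl
  exact AlgHom.congr_fun h c

theorem φ_ψ₂ (y : M₂) : φ Q (ψ₂ Q y) = 1 ⊗ₜ[ℝ] y := by
  rw [ψ₂, AlgHom.comp_apply]
  show φ Q (incl Q (θe.symm y)) = _
  rw [φ_incl]
  congr 1
  exact θe.apply_symm_apply y

theorem φ_comp_ψ : (φ Q).comp (ψ Q) = AlgHom.id ℝ _ := by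
  apply Algebra.TensorProduct.ext'
  intro a b
  rw [AlgHom.comp_apply]
  rw [show (ψ Q) (a ⊗ₜ[ℝ] b) = ψ₁ Q a * ψ₂ Q b from Algebra.TensorProduct.lift_tmul ..]
  rw [map_mul, φ_ψ₂]
  rw [show φ Q (ψ₁ Q a) = Algebra.TensorProduct.includeLeft a from
    AlgHom.congr_fun (φ_comp_ψ₁ Q) a]
  simp [Algebra.TensorProduct.tmul_mul_tmul]

noncomputable def mainEquiv :
    CliffordAlgebra Q' ≃ₐ[ℝ] (CliffordAlgebra Q ⊗[ℝ] M₂) :=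
  AlgEquiv.ofAlgHom (φ Q) (ψ Q) (φ_comp_ψ Q) (ψ_comp_φ Q)

end ClSS
namespace ClSS

variable (r s : ℕ)

/-- reindexing: `Fin (r+s) ⊕ Fin 2 → Fin ((r+1)+(s+1))`, sign-compatible. -/
def τ : Fin (r + s) ⊕ Fin 2 → Fin ((r + 1) + (s + 1)) := fun x =>
  match x with
  | .inl j => ⟨if (j : ℕ) < r then (j : ℕ) else (j : ℕ) + 1, by
      have := j.isLt; split <;> omega⟩
  | .inr k => if k = 0 then ⟨r, by omega⟩ else ⟨r + s + 1, by omega⟩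

theorem τ_inl_val (j : Fin (r + s)) :
    (τ r s (.inl j) : ℕ) = if (j : ℕ) < r then (j : ℕ) else (j : ℕ) + 1 := rfl

theorem τ_inr_val (k : Fin 2) :
    (τ r s (.inr k) : ℕ) = if k = 0 then r else r + s + 1 := by
  fin_cases k <;> rfl

theorem τ_bij : Function.Bijective (τ r s) := by
  rw [Fintype.bijective_iff_injective_and_card]
  refine ⟨?_, by simp; omega⟩
  rintro (j | k) (j' | k') h <;> have hv := congrArg Fin.val h
  · rw [τ_inl_val, τ_inl_val] at hv
    have h1 := j.isLt
    have h2 := j'.isLt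
    exact congrArg Sum.inl (Fin.ext (by split_ifs at hv <;> omega))
  · exfalso
    rw [τ_inl_val, τ_inr_val] at hv
    have h1 := j.isLt
    fin_cases k' <;> simp_all <;> split_ifs at hv <;> omega
  · exfalso
    rw [τ_inr_val, τ_inl_val] at hv
    have h1 := j'.isLt
    fin_cases k <;> simp_all <;> split_ifs at hv <;> omega
  · rw [τ_inr_val, τ_inr_val] at hv
    fin_cases k <;> fin_cases k' <;> simp_all <;> omega

theorem τ_inl_lt (j : Fin (r + s)) :
    ((τ r s (.inl j) : ℕ) < r + 1) ↔ ((j : ℕ) < r) := by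
  simp only [τ]
  split <;> omega

theorem τ_inr0 : ((τ r s (.inr 0) : ℕ)) = r := rfl
theorem τ_inr1 : ((τ r s (.inr 1) : ℕ)) = r + s + 1 := rfl

noncomputable def L : (Fin ((r + 1) + (s + 1)) → ℝ) ≃ₗ[ℝ] ((Fin (r + s) → ℝ) × (ℝ × ℝ)) :=
  (LinearEquiv.funCongrLeft ℝ ℝ (Equiv.ofBijective (τ r s) (τ_bij r s))) ≪≫ₗ
    (LinearEquiv.sumArrowLequivProdArrow _ _ ℝ ℝ) ≪≫ₗ
    ((LinearEquiv.refl ℝ (Fin (r+s) → ℝ)).prodCongr (LinearEquiv.finTwoArrow ℝ ℝ))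

theorem L_apply (x : Fin ((r + 1) + (s + 1)) → ℝ) :
    L r s x = (fun j => x (τ r s (.inl j)), (x (τ r s (.inr 0)), x (τ r s (.inr 1)))) := rfl

noncomputable def Qform_isometry :
    (Qform (r + 1) (s + 1)).IsometryEquiv ((Qform r s).prod Q2) := by
  refine ⟨L r s, fun x => ?_⟩
  change (QuadraticMap.prod (Qform r s) Q2) (L r s x) = (Qform (r + 1) (s + 1)) x
  rw [L_apply]
  rw [QuadraticMap.prod_apply]
  simp only [Qform, QuadraticMap.weightedSumSquares_apply, Q2_apply]
  rw [← Fintype.sum_bijective (τ r s) (τ_bij r s)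
    (fun j => (if ((τ r s j : ℕ)) < r + 1 then (1:ℝ) else -1) • (x (τ r s j) * x (τ r s j)))
    (fun i => (if ((i : ℕ)) < r + 1 then (1:ℝ) else -1) • (x i * x i)) (fun j => rfl)]
  rw [Fintype.sum_sum_type, Fin.sum_univ_two]
  have h0 : ((τ r s (.inr 0) : ℕ) < r + 1) := by rw [τ_inr0]; omega
  have h1 : ¬((τ r s (.inr 1) : ℕ) < r + 1) := by rw [τ_inr1]; omega
  rw [if_pos h0, if_neg h1]
  have : ∀ j : Fin (r + s),
      (if ((τ r s (.inl j) : ℕ)) < r + 1 then (1:ℝ) else -1) •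
        (x (τ r s (.inl j)) * x (τ r s (.inl j))) =
      (if ((j : ℕ)) < r then (1:ℝ) else -1) • (x (τ r s (.inl j)) * x (τ r s (.inl j))) := by
    intro j
    by_cases hj : (j : ℕ) < r
    · rw [if_pos hj, if_pos ((τ_inl_lt r s j).mpr hj)]
    · rw [if_neg hj, if_neg (fun hc => hj ((τ_inl_lt r s j).mp hc))]
  rw [Finset.sum_congr rfl (fun j _ => this j)]
  simp only [smul_eq_mul]
  ring

end ClSS
/-- `Cl(r+1, s+1) ≅ Cl(r, s) ⊗ M₂(ℝ)` as `ℝ`-algebras. -/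
theorem cl_succ_succ_iso_tensor_matrix (r s : ℕ) :
    Nonempty (CliffordAlgebra (Qform (r + 1) (s + 1)) ≃ₐ[ℝ]
      (CliffordAlgebra (Qform r s) ⊗[ℝ] Matrix (Fin 2) (Fin 2) ℝ)) :=
  ⟨(CliffordAlgebra.equivOfIsometry (ClSS.Qform_isometry r s)).trans
    (ClSS.mainEquiv (Qform r s))⟩
end

section
/- The creation and annihilation operators are self-adjoint with respect to the polyform inner product: for all ψ₁, ψ₂ ∈ S = ⋀ℂⁿ and all 1 ≤ i ≤ n, ⟨a_i ψ₁, ψ₂⟩ = ⟨ψ₁, a_i ψ₂⟩ and ⟨a_i† ψ₁, ψ₂⟩ = ⟨ψ₁, a_i† ψ₂⟩. -/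
/-- The space of polyforms (spinors): the exterior algebra of `ℂⁿ`. -/
noncomputable abbrev Polyform (n : ℕ) := ExteriorAlgebra ℂ (Fin n → ℂ)

/-- The creation operator `a_i`: wedging with the basis one-form `e_i`. -/
noncomputable def crea (n : ℕ) (i : Fin n) : Module.End ℂ (Polyform n) :=
  LinearMap.mulLeft ℂ (ExteriorAlgebra.ι ℂ (Pi.single i 1))

/-- The annihilation operator `a_i†`: interior product (left contraction) with the
`i`-th dual basis vector. -/
noncomputable def anni (n : ℕ) (i : Fin n) : Module.End ℂ (Polyform n) :=
  CliffordAlgebra.contractLeft (Q := (0 : QuadraticForm ℂ (Fin n → ℂ))) (LinearMap.proj i)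

/-- The linear functional extracting the coefficient of the top form `e₁ ∧ ⋯ ∧ e_n`
of a polyform. -/
noncomputable def topCoeff (n : ℕ) : Polyform n →ₗ[ℂ] ℂ :=
  ExteriorAlgebra.liftAlternating
    (fun k => if h : k = n
      then AlternatingMap.domDomCongr (finCongr h.symm) (Pi.basisFun ℂ (Fin n)).det
      else 0)

/-- The polyform inner product `⟨ψ₁, ψ₂⟩`: the coefficient of the top form in
`σ(ψ₁) ∧ ψ₂`, where `σ` is the reversal anti-automorphism. -/
noncomputable def polyIP (n : ℕ) (ψ₁ ψ₂ : Polyform n) : ℂ :=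
  topCoeff n (CliffordAlgebra.reverse (Q := (0 : QuadraticForm ℂ (Fin n → ℂ))) ψ₁ * ψ₂)

open ExteriorAlgebra CliffordAlgebra in
/-- `liftAlternating` along a family vanishing in degree `k` kills the `k`-th graded piece. -/
lemma liftAlternating_eq_zero_of_mem_pow {n : ℕ} (k : ℕ) (z : Polyform n)
    (hz : z ∈ (LinearMap.range (ExteriorAlgebra.ι ℂ : (Fin n → ℂ) →ₗ[ℂ] Polyform n)) ^ k) :
    ∀ G : (∀ i, (Fin n → ℂ) [⋀^Fin i]→ₗ[ℂ] ℂ), G k = 0 →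
      ExteriorAlgebra.liftAlternating G z = 0 := by
  induction hz using Submodule.pow_induction_on_left' with
  | algebraMap r =>
    intro G hG
    rw [ExteriorAlgebra.liftAlternating_algebraMap, hG]
    simp
  | add x y i hx hy ihx ihy =>
    intro G hG
    rw [map_add, ihx G hG, ihy G hG, add_zero]
  | mem_mul m hm i x hx ih =>
    intro G hG
    obtain ⟨v, rfl⟩ := hm
    rw [ExteriorAlgebra.liftAlternating_ι_mul]
    refine ih _ ?_
    rw [hG]
    ext w
    simp

open ExteriorAlgebra CliffordAlgebra in
lemma contractLeft_eq_zero_of_mem_pow_zero {n : ℕ}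
    (f : Module.Dual ℂ (Fin n → ℂ)) (z : Polyform n)
    (hz : z ∈ (LinearMap.range (ExteriorAlgebra.ι ℂ : (Fin n → ℂ) →ₗ[ℂ] Polyform n)) ^ 0) :
    contractLeft (Q := (0 : QuadraticForm ℂ (Fin n → ℂ))) f z = 0 := by
  rw [pow_zero] at hz
  obtain ⟨r, rfl⟩ := Submodule.mem_one.mp hz
  exact contractLeft_algebraMap _ f r

open ExteriorAlgebra CliffordAlgebra in
/-- Contraction lowers the degree by one. -/
lemma contractLeft_mem_pow {n : ℕ} (f : Module.Dual ℂ (Fin n → ℂ)) (k : ℕ) (z : Polyform n)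
    (hz : z ∈ (LinearMap.range (ExteriorAlgebra.ι ℂ : (Fin n → ℂ) →ₗ[ℂ] Polyform n)) ^ k) :
    contractLeft (Q := (0 : QuadraticForm ℂ (Fin n → ℂ))) f z ∈
      (LinearMap.range (ExteriorAlgebra.ι ℂ : (Fin n → ℂ) →ₗ[ℂ] Polyform n)) ^ (k - 1) := by
  induction hz using Submodule.pow_induction_on_left' with
  | algebraMap r =>
    rw [contractLeft_algebraMap]
    exact Submodule.zero_mem _
  | add x y i hx hy ihx ihy =>
    rw [map_add]
    exact Submodule.add_mem _ ihx ihy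
  | mem_mul m hm i x hx ih =>
    obtain ⟨v, rfl⟩ := hm
    rw [contractLeft_ι_mul, Nat.succ_sub_one]
    refine Submodule.sub_mem _ (Submodule.smul_mem _ _ hx) ?_
    cases i with
    | zero =>
      rw [contractLeft_eq_zero_of_mem_pow_zero f x hx, mul_zero]
      exact Submodule.zero_mem _
    | succ j =>
      rw [pow_succ']
      exact Submodule.mul_mem_mul (LinearMap.mem_range_self _ v) ih

open ExteriorAlgebra CliffordAlgebra in
/-- The top coefficient of any contraction vanishes. -/
lemma topCoeff_contractLeft {n : ℕ} (f : Module.Dual ℂ (Fin n → ℂ)) (z : Polyform n) :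
    topCoeff n (contractLeft (Q := (0 : QuadraticForm ℂ (Fin n → ℂ))) f z) = 0 := by
  have hz : z ∈ Submodule.span ℂ
      (Set.range fun x : Σ k, (Fin k → (Fin n → ℂ)) => ιMulti ℂ x.1 x.2) := by
    rw [ExteriorAlgebra.ιMulti_span]; exact Submodule.mem_top
  induction hz using Submodule.span_induction with
  | mem z hz =>
    obtain ⟨⟨k, v⟩, rfl⟩ := hz
    cases k with
    | zero =>
      simp only [ExteriorAlgebra.ιMulti_zero_apply]
      rw [contractLeft_one, map_zero]
    | succ m =>
      by_cases hmn : m = n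
      · -- degree n+1 element is zero since n+1 vectors in ℂⁿ are dependent
        have hdep : ¬ LinearIndependent ℂ v := by
          intro hLI
          have := hLI.fintype_card_le_finrank
          rw [Module.finrank_fin_fun, Fintype.card_fin] at this
          omega
        have h0 : ExteriorAlgebra.ιMulti ℂ (m + 1) v = (0 : Polyform n) :=
          AlternatingMap.map_linearDependent _ v hdep
        simp only [h0, map_zero]
      · have hmem : ιMulti ℂ (m + 1) v ∈
            (LinearMap.range (ExteriorAlgebra.ι ℂ : (Fin n → ℂ) →ₗ[ℂ] Polyform n)) ^ (m + 1) :=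
          ExteriorAlgebra.ιMulti_range ℂ (m + 1) ⟨v, rfl⟩
        have hlow := contractLeft_mem_pow f (m + 1) _ hmem
        refine liftAlternating_eq_zero_of_mem_pow m _ hlow _ ?_
        exact dif_neg hmn
  | zero => rw [map_zero, map_zero]
  | add x y _ _ ihx ihy => rw [map_add, map_add, ihx, ihy, add_zero]
  | smul c x _ ih => rw [map_smul, map_smul, ih, smul_zero]

open ExteriorAlgebra CliffordAlgebra in
/-- Key adjunction: `⟨x ⌊ f, y⟩_top = ⟨x, f ⌋ y⟩_top`. -/
lemma topCoeff_contractRight_mul {n : ℕ} (f : Module.Dual ℂ (Fin n → ℂ)) (x : Polyform n) :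
    ∀ y : Polyform n,
      topCoeff n (contractRight (Q := (0 : QuadraticForm ℂ (Fin n → ℂ))) x f * y) =
      topCoeff n (x * contractLeft (Q := (0 : QuadraticForm ℂ (Fin n → ℂ))) f y) := by
  induction x using CliffordAlgebra.right_induction with
  | algebraMap r =>
    intro y
    rw [contractRight_algebraMap, zero_mul, map_zero, ← Algebra.smul_def, map_smul,
      topCoeff_contractLeft, smul_zero]
  | add x y hx hy =>
    intro w
    rw [map_add, LinearMap.add_apply, add_mul, map_add, hx, hy, add_mul, map_add]
  | mul_ι m x ih =>
    intro y
    rw [contractRight_mul_ι, sub_mul, smul_mul_assoc, map_sub, map_smul, mul_assoc,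
      ih (CliffordAlgebra.ι _ m * y), contractLeft_ι_mul, mul_sub, mul_smul_comm, map_sub,
      map_smul, ← mul_assoc]
    ring

/-- Creation and annihilation operators are self-adjoint for the polyform inner product. -/
theorem crea_anni_selfAdjoint (n : ℕ) (hn : 1 ≤ n) (i : Fin n) (ψ₁ ψ₂ : Polyform n) :
    polyIP n (crea n i ψ₁) ψ₂ = polyIP n ψ₁ (crea n i ψ₂) ∧
    polyIP n (anni n i ψ₁) ψ₂ = polyIP n ψ₁ (anni n i ψ₂) := by
  constructor
  · simp only [polyIP, crea, LinearMap.mulLeft_apply, CliffordAlgebra.reverse.map_mul,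
      CliffordAlgebra.reverse_ι, mul_assoc]
  · have h := topCoeff_contractRight_mul (LinearMap.proj i)
      (CliffordAlgebra.reverse (Q := (0 : QuadraticForm ℂ (Fin n → ℂ))) ψ₁) ψ₂
    rw [CliffordAlgebra.contractRight_eq, CliffordAlgebra.reverse_reverse] at h
    simpa only [polyIP, anni] using h
end

section
/- The polyform inner product on S = ⋀ℂⁿ is invariant under the spin Lie algebra: for every real antisymmetric 2n×2n matrix X, setting A(X) := (1/8) Σ_{A,B} X^{AB} Γ_A Γ_B, one has ⟨A(X) ψ₁, ψ₂⟩ + ⟨ψ₁, A(X) ψ₂⟩ = 0 for all ψ₁, ψ₂ ∈ S. -/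
/-- The gamma operators: `Γ_i = a_i + a_i†` and `Γ_{i+n} = I•(a_i − a_i†)` (0-indexed). -/
noncomputable def Gam (n : ℕ) (A : Fin (2 * n)) : Module.End ℂ (Polyform n) :=
  if h : (A : ℕ) < n then crea n ⟨A, h⟩ + anni n ⟨A, h⟩
  else Complex.I • (crea n ⟨(A : ℕ) - n, by have := A.isLt; omega⟩
    - anni n ⟨(A : ℕ) - n, by have := A.isLt; omega⟩)

/-- The spin generator `A(X) := (1/8) Σ_{A,B} X^{AB} Γ_A Γ_B`. -/
noncomputable def spinGen (n : ℕ) (X : Matrix (Fin (2 * n)) (Fin (2 * n)) ℝ) :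
    Module.End ℂ (Polyform n) :=
  (8 : ℂ)⁻¹ • ∑ A, ∑ B, (X A B : ℂ) • (Gam n A * Gam n B)

namespace PolyAux

open ExteriorAlgebra

variable {n : ℕ}

local notation "Q0" => (0 : QuadraticForm ℂ (Fin n → ℂ))
local notation "rev" => CliffordAlgebra.reverse (Q := (0 : QuadraticForm ℂ (Fin n → ℂ)))
local notation "ctr" => CliffordAlgebra.contractLeft (Q := (0 : QuadraticForm ℂ (Fin n → ℂ)))

lemma topCoeff_ιMulti_ne {k : ℕ} (hk : k ≠ n) (v : Fin k → (Fin n → ℂ)) :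
    topCoeff n (ιMulti ℂ k v) = 0 := by
  rw [topCoeff, liftAlternating_apply_ιMulti, dif_neg hk, AlternatingMap.zero_apply]

lemma ιMulti_big_eq_zero {k : ℕ} (hk : n < k) (v : Fin k → (Fin n → ℂ)) :
    ιMulti ℂ k v = 0 := by
  refine AlternatingMap.map_linearDependent _ _ fun h => ?_
  have := h.fintype_card_le_finrank
  rw [Fintype.card_fin, Module.finrank_fin_fun] at this
  omega

lemma mul_ι_span_mem (a : Fin n → ℂ) (k : ℕ) {x : Polyform n}
    (hx : x ∈ Submodule.span ℂ (Set.range (ιMulti ℂ k))) :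
    ExteriorAlgebra.ι ℂ a * x ∈ Submodule.span ℂ (Set.range (ιMulti ℂ (k + 1))) := by
  induction hx using Submodule.span_induction with
  | mem x hx =>
    obtain ⟨w, rfl⟩ := hx
    refine Submodule.subset_span ⟨Matrix.vecCons a w, ?_⟩
    rw [ιMulti_succ_apply, Matrix.cons_val_zero, Matrix.tail_cons]
  | zero => rw [mul_zero]; exact zero_mem _
  | add x y _ _ hx hy => rw [mul_add]; exact add_mem hx hy
  | smul c x _ hx => rw [mul_smul_comm]; exact Submodule.smul_mem _ _ hx

lemma contractLeft_ιMulti_mem (f : Module.Dual ℂ (Fin n → ℂ)) (k : ℕ) :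
    ∀ v : Fin (k + 1) → (Fin n → ℂ),
      ctr f (ιMulti ℂ (k + 1) v) ∈ Submodule.span ℂ (Set.range (ιMulti ℂ k)) := by
  induction k with
  | zero =>
    intro v
    rw [ιMulti_succ_apply, CliffordAlgebra.contractLeft_ι_mul, ιMulti_zero_apply,
      CliffordAlgebra.contractLeft_one, mul_zero, sub_zero]
    exact Submodule.smul_mem _ _
      (Submodule.subset_span ⟨fun _ => 0, ιMulti_zero_apply _⟩)
  | succ k ih =>
    intro v
    rw [ιMulti_succ_apply, CliffordAlgebra.contractLeft_ι_mul]
    refine sub_mem (Submodule.smul_mem _ _ (Submodule.subset_span ⟨_, rfl⟩)) ?_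
    exact mul_ι_span_mem _ _ (ih _)

lemma topCoeff_contractLeft (f : Module.Dual ℂ (Fin n → ℂ)) (y : Polyform n) :
    topCoeff n (ctr f y) = 0 := by
  have hy : y ∈ Submodule.span ℂ
      (Set.range fun x : Σ k, (Fin k → (Fin n → ℂ)) => ιMulti ℂ x.1 x.2) :=
    ιMulti_span (R := ℂ) (M := Fin n → ℂ) ▸ Submodule.mem_top
  induction hy using Submodule.span_induction with
  | mem x hx =>
    obtain ⟨⟨k, v⟩, rfl⟩ := hx
    dsimp only
    cases k with
    | zero => rw [ιMulti_zero_apply, CliffordAlgebra.contractLeft_one, map_zero]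
    | succ k =>
      by_cases hk : k = n
      · subst hk
        rw [ιMulti_big_eq_zero (Nat.lt_succ_self k) v, map_zero, map_zero]
      · have hmem := contractLeft_ιMulti_mem f k v
        have hker : Submodule.span ℂ (Set.range (ιMulti ℂ k)) ≤
            LinearMap.ker (topCoeff n) := by
          rw [Submodule.span_le]
          rintro _ ⟨w, rfl⟩
          exact topCoeff_ιMulti_ne hk w
        exact hker hmem
  | zero => rw [map_zero, map_zero]
  | add x y _ _ hx hy => rw [map_add, map_add, hx, hy, add_zero]
  | smul c x _ hx => rw [map_smul, map_smul, hx, smul_zero]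

lemma contract_adj (f : Module.Dual ℂ (Fin n → ℂ)) (x y : Polyform n) :
    topCoeff n (rev (ctr f x) * y) = topCoeff n (rev x * ctr f y) := by
  have hmono : ∀ (k : ℕ) (v : Fin k → (Fin n → ℂ)) (y : Polyform n),
      topCoeff n (rev (ctr f (ιMulti ℂ k v)) * y)
        = topCoeff n (rev (ιMulti ℂ k v) * ctr f y) := by
    intro k
    induction k with
    | zero =>
      intro v y
      rw [ιMulti_zero_apply, CliffordAlgebra.contractLeft_one, map_zero, zero_mul,
        map_zero, CliffordAlgebra.reverse.map_one, one_mul, topCoeff_contractLeft]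
    | succ k ih =>
      intro v y
      have key := ih (Matrix.vecTail v) (ExteriorAlgebra.ι ℂ (v 0) * y)
      rw [CliffordAlgebra.contractLeft_ι_mul] at key
      rw [ιMulti_succ_apply, CliffordAlgebra.contractLeft_ι_mul]
      simp only [map_sub, map_smul, CliffordAlgebra.reverse.map_mul,
        CliffordAlgebra.reverse_ι, sub_mul, smul_mul_assoc, mul_sub, mul_smul_comm,
        smul_eq_mul, mul_assoc] at key ⊢
      linear_combination -key
  have hy : x ∈ Submodule.span ℂ
      (Set.range fun p : Σ k, (Fin k → (Fin n → ℂ)) => ιMulti ℂ p.1 p.2) :=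
    ιMulti_span (R := ℂ) (M := Fin n → ℂ) ▸ Submodule.mem_top
  induction hy using Submodule.span_induction with
  | mem x hx => obtain ⟨⟨k, v⟩, rfl⟩ := hx; exact hmono k v y
  | zero => simp
  | add a b _ _ ha hb =>
    simp only [map_add, add_mul, ha, hb]
  | smul c a _ ha =>
    simp only [map_smul, smul_mul_assoc, ha]

lemma wedge_adj (m : Fin n → ℂ) (x y : Polyform n) :
    topCoeff n (rev (ExteriorAlgebra.ι ℂ m * x) * y)
      = topCoeff n (rev x * (ExteriorAlgebra.ι ℂ m * y)) := by
  rw [CliffordAlgebra.reverse.map_mul, CliffordAlgebra.reverse_ι, mul_assoc]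

lemma polyIP_Gam (A : Fin (2 * n)) (x y : Polyform n) :
    polyIP n (Gam n A x) y = polyIP n x (Gam n A y) := by
  rw [Gam, polyIP, polyIP]
  split_ifs with h
  · rw [LinearMap.add_apply, LinearMap.add_apply, crea, anni, LinearMap.mulLeft_apply,
      LinearMap.mulLeft_apply, map_add, add_mul, map_add, mul_add, map_add,
      wedge_adj, contract_adj]
  · rw [LinearMap.smul_apply, LinearMap.smul_apply, LinearMap.sub_apply,
      LinearMap.sub_apply, crea, anni, LinearMap.mulLeft_apply, LinearMap.mulLeft_apply,
      map_smul, smul_mul_assoc, map_smul, mul_smul_comm, map_smul, map_sub, sub_mul,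
      map_sub, mul_sub, map_sub, wedge_adj, contract_adj]

/-- left-slot linearization of `polyIP`. -/
noncomputable def polyL (n : ℕ) (ψ₂ : Polyform n) : Polyform n →ₗ[ℂ] ℂ :=
  (topCoeff n) ∘ₗ (LinearMap.mulRight ℂ ψ₂) ∘ₗ
    (CliffordAlgebra.reverse (Q := (0 : QuadraticForm ℂ (Fin n → ℂ))))

/-- right-slot linearization of `polyIP`. -/
noncomputable def polyR (n : ℕ) (ψ₁ : Polyform n) : Polyform n →ₗ[ℂ] ℂ :=
  (topCoeff n) ∘ₗ LinearMap.mulLeft ℂ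
    (CliffordAlgebra.reverse (Q := (0 : QuadraticForm ℂ (Fin n → ℂ))) ψ₁)

lemma polyL_apply (ψ₁ ψ₂ : Polyform n) : polyL n ψ₂ ψ₁ = polyIP n ψ₁ ψ₂ := rfl

lemma polyR_apply (ψ₁ ψ₂ : Polyform n) : polyR n ψ₁ ψ₂ = polyIP n ψ₁ ψ₂ := rfl

end PolyAux

open Matrix in
/-- The polyform inner product is invariant under the spin Lie algebra:
`⟨A(X)ψ₁, ψ₂⟩ + ⟨ψ₁, A(X)ψ₂⟩ = 0` for every real antisymmetric matrix `X`. -/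
theorem polyIP_spin_invariant (n : ℕ) (hn : 1 ≤ n)
    (X : Matrix (Fin (2 * n)) (Fin (2 * n)) ℝ) (hX : Xᵀ = -X) (ψ₁ ψ₂ : Polyform n) :
    polyIP n (spinGen n X ψ₁) ψ₂ + polyIP n ψ₁ (spinGen n X ψ₂) = 0 := by
  classical
  have hX' : ∀ A B, (X B A : ℂ) = -(X A B : ℂ) := by
    intro A B
    have h := congrFun (congrFun hX A) B
    rw [Matrix.transpose_apply, Matrix.neg_apply] at h
    exact_mod_cast congrArg (Complex.ofReal) h
  have e1 : polyIP n (spinGen n X ψ₁) ψ₂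
      = (8 : ℂ)⁻¹ * ∑ A, ∑ B, (X A B : ℂ) * polyIP n ψ₁ ((Gam n B * Gam n A) ψ₂) := by
    rw [← PolyAux.polyL_apply, spinGen, LinearMap.smul_apply, _root_.map_smul, smul_eq_mul]
    congr 1
    rw [LinearMap.sum_apply, map_sum]
    refine Finset.sum_congr rfl fun A _ => ?_
    rw [LinearMap.sum_apply, map_sum]
    refine Finset.sum_congr rfl fun B _ => ?_
    rw [LinearMap.smul_apply, _root_.map_smul, smul_eq_mul, PolyAux.polyL_apply]
    congr 1
    rw [Module.End.mul_apply, Module.End.mul_apply,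
      PolyAux.polyIP_Gam A, PolyAux.polyIP_Gam B]
  have e2 : polyIP n ψ₁ (spinGen n X ψ₂)
      = (8 : ℂ)⁻¹ * ∑ A, ∑ B, (X A B : ℂ) * polyIP n ψ₁ ((Gam n A * Gam n B) ψ₂) := by
    rw [← PolyAux.polyR_apply, spinGen, LinearMap.smul_apply, _root_.map_smul, smul_eq_mul]
    congr 1
    rw [LinearMap.sum_apply, map_sum]
    refine Finset.sum_congr rfl fun A _ => ?_
    rw [LinearMap.sum_apply, map_sum]
    refine Finset.sum_congr rfl fun B _ => ?_
    rw [LinearMap.smul_apply, _root_.map_smul, smul_eq_mul, PolyAux.polyR_apply]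
  rw [e1, e2, ← mul_add]
  have hzero : (∑ A, ∑ B, (X A B : ℂ) * polyIP n ψ₁ ((Gam n B * Gam n A) ψ₂))
      + (∑ A, ∑ B, (X A B : ℂ) * polyIP n ψ₁ ((Gam n A * Gam n B) ψ₂)) = 0 := by
    rw [Finset.sum_comm (s := Finset.univ) (t := Finset.univ)
      (f := fun A B => (X A B : ℂ) * polyIP n ψ₁ ((Gam n B * Gam n A) ψ₂)),
      ← Finset.sum_add_distrib]
    refine Finset.sum_eq_zero fun A _ => ?_
    rw [← Finset.sum_add_distrib]
    refine Finset.sum_eq_zero fun B _ => ?_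
    rw [hX' A B]
    ring
  rw [hzero, mul_zero]
end

section
/- In the polyform model of Cl(2n) on S = ⋀ℂⁿ, the antilinear operators R := Γ₁ ∘ … ∘ Γ_n ∘ ∗ and R' := Γ_{n+1} ∘ … ∘ Γ_{2n} ∘ ∗ satisfy R ∘ Γ_A = (−1)^{n−1} Γ_A ∘ R and R' ∘ Γ_A = (−1)^{n} Γ_A ∘ R' for all A ∈ {1, …, 2n}. -/
/-- The basis polyform `e_{i₁} ∧ ⋯ ∧ e_{i_k}` indexed by a list of indices. -/
noncomputable def basisMonomial (n : ℕ) (l : List (Fin n)) : Polyform n :=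
  (l.map fun i => ExteriorAlgebra.ι ℂ (Pi.single i (1 : ℂ))).prod

/-- `st` is the complex conjugation `∗` on polyforms: the `ℂ`-antilinear involution fixing
each basis polyform and conjugating the complex coefficients. -/
def IsConjugation (n : ℕ) (st : Polyform n → Polyform n) : Prop :=
  (∀ x y, st (x + y) = st x + st y) ∧
  (∀ (z : ℂ) (x : Polyform n), st (z • x) = (starRingEnd ℂ) z • st x) ∧
  (∀ l : List (Fin n), st (basisMonomial n l) = basisMonomial n l)

/-- The antilinear operator `R := Γ₁ ∘ ⋯ ∘ Γ_n ∘ ∗`. -/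
noncomputable def Rop (n : ℕ) (st : Polyform n → Polyform n) : Polyform n → Polyform n :=
  fun ψ => (((List.finRange n).map fun i => Gam n (Fin.castLE (by omega) i)).prod) (st ψ)

/-- The antilinear operator `R' := Γ_{n+1} ∘ ⋯ ∘ Γ_{2n} ∘ ∗`. -/
noncomputable def Rop' (n : ℕ) (st : Polyform n → Polyform n) : Polyform n → Polyform n :=
  fun ψ =>
    (((List.finRange n).map fun i => Gam n ⟨n + i.1, by have := i.2; omega⟩).prod) (st ψ)

lemma ii_swap (n : ℕ) (i j : Fin n) :
    ExteriorAlgebra.ι ℂ ((Pi.single i 1 : Fin n → ℂ)) * ExteriorAlgebra.ι ℂ ((Pi.single j 1 : Fin n → ℂ))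
      + ExteriorAlgebra.ι ℂ ((Pi.single j 1 : Fin n → ℂ)) * ExteriorAlgebra.ι ℂ ((Pi.single i 1 : Fin n → ℂ)) = 0 := by
  have := ExteriorAlgebra.ι_sq_zero (R := ℂ) (M := Fin n → ℂ) (Pi.single i (1:ℂ) + Pi.single j (1:ℂ))
  simp only [map_add, add_mul, mul_add, ExteriorAlgebra.ι_sq_zero, zero_add, add_zero] at this
  rw [← this]; abel

-- CAR relations

lemma crea_crea (n : ℕ) (i j : Fin n) :
    crea n i * crea n j + crea n j * crea n i = 0 := by
  apply LinearMap.ext; intro x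
  simp only [LinearMap.add_apply, Module.End.mul_apply, crea, LinearMap.mulLeft_apply,
    LinearMap.zero_apply]
  rw [← mul_assoc, ← mul_assoc, ← add_mul, ii_swap, zero_mul]

lemma anni_anni (n : ℕ) (i j : Fin n) :
    anni n i * anni n j + anni n j * anni n i = 0 := by
  apply LinearMap.ext; intro x
  simp only [LinearMap.add_apply, Module.End.mul_apply, anni, LinearMap.zero_apply]
  rw [CliffordAlgebra.contractLeft_comm]
  abel

lemma anni_crea (n : ℕ) (i j : Fin n) :
    anni n i * crea n j + crea n j * anni n i = (if i = j then (1:ℂ) else 0) • 1 := by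
  apply LinearMap.ext; intro x
  simp only [LinearMap.add_apply, Module.End.mul_apply, anni, crea, LinearMap.mulLeft_apply,
    LinearMap.smul_apply, Module.End.one_apply]
  rw [CliffordAlgebra.contractLeft_ι_mul]
  simp only [LinearMap.proj_apply, Pi.single_apply]
  abel

lemma key1 (n : ℕ) (i j : Fin n) (hij : i ≠ j) :
    (crea n i + anni n i) * (crea n j + anni n j)
      + (crea n j + anni n j) * (crea n i + anni n i) = 0 := by
  calc (crea n i + anni n i) * (crea n j + anni n j)
      + (crea n j + anni n j) * (crea n i + anni n i)
      = (crea n i * crea n j + crea n j * crea n i)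
        + (anni n i * anni n j + anni n j * anni n i)
        + (anni n i * crea n j + crea n j * anni n i)
        + (anni n j * crea n i + crea n i * anni n j) := by noncomm_ring
    _ = 0 := by
        rw [crea_crea, anni_anni, anni_crea, anni_crea]
        simp [hij, hij.symm]

lemma key2 (n : ℕ) (i j : Fin n) :
    (crea n i + anni n i) * (Complex.I • (crea n j - anni n j))
      + (Complex.I • (crea n j - anni n j)) * (crea n i + anni n i) = 0 := by
  rw [mul_smul_comm, smul_mul_assoc, ← smul_add]
  have : (crea n i + anni n i) * (crea n j - anni n j)
      + (crea n j - anni n j) * (crea n i + anni n i)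
      = (crea n i * crea n j + crea n j * crea n i)
        - (anni n i * anni n j + anni n j * anni n i)
        + (anni n i * crea n j + crea n j * anni n i)
        - (anni n j * crea n i + crea n i * anni n j) := by
    simp only [sub_mul, mul_sub, add_mul, mul_add]; abel
  rw [this, crea_crea, anni_anni, anni_crea, anni_crea]
  by_cases h : i = j
  · simp [h]
  · simp [h, Ne.symm h]

lemma key3 (n : ℕ) (i j : Fin n) (hij : i ≠ j) :
    (Complex.I • (crea n i - anni n i)) * (Complex.I • (crea n j - anni n j))
      + (Complex.I • (crea n j - anni n j)) * (Complex.I • (crea n i - anni n i)) = 0 := by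
  rw [mul_smul_comm, smul_mul_assoc, mul_smul_comm, smul_mul_assoc, ← smul_add, ← smul_add,
    smul_smul]
  have : (crea n i - anni n i) * (crea n j - anni n j)
      + (crea n j - anni n j) * (crea n i - anni n i)
      = (crea n i * crea n j + crea n j * crea n i)
        + (anni n i * anni n j + anni n j * anni n i)
        - (anni n i * crea n j + crea n j * anni n i)
        - (anni n j * crea n i + crea n i * anni n j) := by
    simp only [sub_mul, mul_sub, add_mul, mul_add]; abel
  rw [this, crea_crea, anni_anni, anni_crea, anni_crea]
  simp [hij, hij.symm]

lemma gam_gam (n : ℕ) (A B : Fin (2*n)) (hAB : A ≠ B) :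
    Gam n A * Gam n B + Gam n B * Gam n A = 0 := by
  have hval : (A:ℕ) ≠ (B:ℕ) := fun h => hAB (Fin.ext h)
  by_cases hA : (A:ℕ) < n <;> by_cases hB : (B:ℕ) < n
  · simp only [Gam, dif_pos hA, dif_pos hB]
    exact key1 n _ _ (Fin.ne_of_val_ne hval)
  · simp only [Gam, dif_pos hA, dif_neg hB]
    exact key2 n _ _
  · rw [add_comm]
    simp only [Gam, dif_pos hB, dif_neg hA]
    exact key2 n _ _
  · simp only [Gam, dif_neg hA, dif_neg hB]
    refine key3 n _ _ ?_
    have hA' := A.isLt; have hB' := B.isLt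
    simp only [ne_eq, Fin.mk.injEq]
    omega

lemma gam_swap (n : ℕ) (A B : Fin (2*n)) (hAB : A ≠ B) :
    Gam n B * Gam n A = -(Gam n A * Gam n B) :=
  eq_neg_of_add_eq_zero_left (by rw [add_comm]; exact gam_gam n A B hAB)

lemma basisMonomial_mul (n : ℕ) (l l' : List (Fin n)) :
    basisMonomial n l * basisMonomial n l' = basisMonomial n (l ++ l') := by
  simp [basisMonomial, List.map_append, List.prod_append]

lemma crea_monomial (n : ℕ) (j : Fin n) (l : List (Fin n)) :
    crea n j (basisMonomial n l) = basisMonomial n (j :: l) := by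
  simp [crea, basisMonomial]

lemma span_monomials (n : ℕ) :
    Submodule.span ℂ (Set.range (basisMonomial n)) = ⊤ := by
  rw [eq_top_iff]
  rintro x -
  induction x using ExteriorAlgebra.induction with
  | algebraMap r =>
      have h : (algebraMap ℂ (Polyform n)) r = r • basisMonomial n [] := by
        simp [basisMonomial, Algebra.algebraMap_eq_smul_one]
      rw [h]
      exact Submodule.smul_mem _ _ (Submodule.subset_span ⟨[], rfl⟩)
  | ι v =>
      have hsingle : ∀ i : Fin n, (Pi.single i 1 : Fin n → ℂ) = fun j => if i = j then 1 else 0 := by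
        intro i; funext j; rw [Pi.single_apply]; exact if_congr eq_comm rfl rfl
      have h1 : v = ∑ i : Fin n, v i • (Pi.single i 1 : Fin n → ℂ) := by
        conv_lhs => rw [pi_eq_sum_univ v]
        exact Finset.sum_congr rfl fun i _ => by rw [hsingle]
      have h2 : ExteriorAlgebra.ι ℂ v = ∑ i : Fin n, v i • basisMonomial n [i] := by
        conv_lhs => rw [h1]
        rw [map_sum]
        exact Finset.sum_congr rfl fun i _ => by simp [basisMonomial]
      rw [h2]
      exact Submodule.sum_mem _ fun i _ =>
        Submodule.smul_mem _ _ (Submodule.subset_span ⟨[i], rfl⟩)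
  | mul a b ha hb =>
      have hle : Submodule.span ℂ (Set.range (basisMonomial n))
          * Submodule.span ℂ (Set.range (basisMonomial n))
          ≤ Submodule.span ℂ (Set.range (basisMonomial n)) := by
        rw [Submodule.span_mul_span]
        apply Submodule.span_le.2
        rintro _ ⟨_, ⟨l, rfl⟩, _, ⟨l', rfl⟩, rfl⟩
        exact Submodule.subset_span ⟨l ++ l', (basisMonomial_mul n l l').symm⟩
      exact hle (Submodule.mul_mem_mul ha hb)
  | add a b ha hb => exact Submodule.add_mem _ ha hb

/-- Two conj-linear maps agreeing on monomials agree everywhere. -/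

lemma ext_conj_linear (n : ℕ) (f g : Polyform n → Polyform n)
    (hfa : ∀ x y, f (x + y) = f x + f y)
    (hfs : ∀ (z : ℂ) x, f (z • x) = (starRingEnd ℂ) z • f x)
    (hga : ∀ x y, g (x + y) = g x + g y)
    (hgs : ∀ (z : ℂ) x, g (z • x) = (starRingEnd ℂ) z • g x)
    (h : ∀ l, f (basisMonomial n l) = g (basisMonomial n l)) :
    ∀ x, f x = g x := by
  let T : Polyform n →ₛₗ[starRingEnd ℂ] Polyform n :=
    { toFun := fun x => f x - g x
      map_add' := fun x y => by simp only [hfa, hga]; abel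
      map_smul' := fun z x => by simp only [hfs, hgs, smul_sub, RingHom.id_apply] }
  have hker : Submodule.span ℂ (Set.range (basisMonomial n)) ≤ LinearMap.ker T := by
    apply Submodule.span_le.2
    rintro _ ⟨l, rfl⟩
    simp only [SetLike.mem_coe, LinearMap.mem_ker]
    show f _ - g _ = 0
    rw [h l, sub_self]
  rw [span_monomials] at hker
  intro x
  have : T x = 0 := hker (Submodule.mem_top) 
  simpa [T, sub_eq_zero] using this

section ST

variable {n : ℕ} {st : Polyform n → Polyform n} (hst : IsConjugation n st)

include hst

lemma st_zero : st 0 = 0 := by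
  have h := hst.1 0 0
  rw [add_zero] at h
  exact (left_eq_add.mp h)

lemma st_sub (x y : Polyform n) : st (x - y) = st x - st y := by
  have hneg : st (-y) = - st y := by
    have h := hst.2.1 (-1) y
    simpa using h
  rw [sub_eq_add_neg, hst.1, hneg, sub_eq_add_neg]

lemma st_crea (j : Fin n) (x : Polyform n) : st (crea n j x) = crea n j (st x) := by
  refine ext_conj_linear n (fun x => st (crea n j x)) (fun x => crea n j (st x))
    ?_ ?_ ?_ ?_ ?_ x
  · intro a b; rw [map_add, hst.1]
  · intro z a; rw [map_smul, hst.2.1]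
  · intro a b; rw [hst.1, map_add]
  · intro z a; rw [hst.2.1, map_smul]
  · intro l; rw [crea_monomial, hst.2.2, hst.2.2, crea_monomial]

lemma st_anni (i : Fin n) (x : Polyform n) : st (anni n i x) = anni n i (st x) := by
  have key : ∀ l : List (Fin n),
      st (anni n i (basisMonomial n l)) = anni n i (basisMonomial n l) := by
    intro l
    induction l with
    | nil =>
        have h0 : anni n i (basisMonomial n []) = 0 := by
          simp [anni, basisMonomial, CliffordAlgebra.contractLeft_one]
        rw [h0, st_zero hst]
    | cons j l ih =>
        have e2 : anni n i (basisMonomial n (j :: l)) =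
            (if i = j then (1:ℂ) else 0) • basisMonomial n l
              - crea n j (anni n i (basisMonomial n l)) := by
          have e1 : basisMonomial n (j :: l)
              = ExteriorAlgebra.ι ℂ (Pi.single j 1) * basisMonomial n l := by
            simp [basisMonomial]
          rw [e1]
          show CliffordAlgebra.contractLeft _ _ = _
          rw [CliffordAlgebra.contractLeft_ι_mul]
          simp only [LinearMap.proj_apply, Pi.single_apply, crea, LinearMap.mulLeft_apply]
          rfl
        rw [e2, st_sub hst, hst.2.1, hst.2.2, st_crea hst, ih]
        congr 2
        by_cases h : i = j <;> simp [h]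
  refine ext_conj_linear n (fun x => st (anni n i x)) (fun x => anni n i (st x))
    ?_ ?_ ?_ ?_ ?_ x
  · intro a b; rw [map_add, hst.1]
  · intro z a; rw [map_smul, hst.2.1]
  · intro a b; rw [hst.1, map_add]
  · intro z a; rw [hst.2.1, map_smul]
  · intro l; rw [key l, hst.2.2]

lemma st_gam (A : Fin (2*n)) (x : Polyform n) :
    st (Gam n A x) = (if (A:ℕ) < n then (1:ℂ) else -1) • Gam n A (st x) := by
  by_cases hA : (A:ℕ) < n
  · simp only [Gam, dif_pos hA, if_pos hA, one_smul, LinearMap.add_apply]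
    rw [hst.1, st_crea hst, st_anni hst]
  · simp only [Gam, dif_neg hA, if_neg hA]
    rw [LinearMap.smul_apply, hst.2.1, LinearMap.sub_apply, st_sub hst, st_crea hst,
      st_anni hst, LinearMap.smul_apply, LinearMap.sub_apply]
    simp [Complex.conj_I, smul_smul]

end ST

lemma prod_gam_comm (n : ℕ) (A : Fin (2*n)) (L : List (Fin (2*n))) :
    ((L.map (Gam n)).prod) * Gam n A
      = ((-1:ℂ) ^ (L.countP (fun B => decide (B ≠ A)))) • (Gam n A * (L.map (Gam n)).prod) := by
  induction L with
  | nil => simp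
  | cons B L ih =>
    rw [List.map_cons, List.prod_cons, mul_assoc, ih]
    by_cases hB : B = A
    · subst hB
      have h0 : List.countP (fun C => decide (C ≠ B)) (B :: L)
          = List.countP (fun C => decide (C ≠ B)) L := by simp [List.countP_cons]
      rw [h0, mul_smul_comm]
    · have : (List.countP (fun B => decide (B ≠ A)) (B :: L))
          = List.countP (fun B => decide (B ≠ A)) L + 1 := by
        simp [List.countP_cons, hB]
      rw [this, mul_smul_comm, ← mul_assoc, gam_swap n A B (Ne.symm hB), pow_succ]
      simp only [neg_mul, smul_neg, mul_neg_one, neg_smul, mul_assoc]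
      rw [← neg_one_smul ℂ (Gam n A * Gam n B), smul_mul_assoc, smul_smul, mul_neg_one, mul_assoc]

lemma countP_ne {α : Type*} [DecidableEq α] (a : α) (l : List α) (hnd : l.Nodup) :
    l.countP (fun b => decide (b ≠ a)) = if a ∈ l then l.length - 1 else l.length := by
  induction l with
  | nil => simp
  | cons b l ih =>
    rw [List.nodup_cons] at hnd
    have ihl := ih hnd.2
    by_cases hb : b = a
    · subst hb
      have hnotmem : b ∉ l := hnd.1
      have h0 : List.countP (fun c => decide (c ≠ b)) (b :: l)
          = List.countP (fun c => decide (c ≠ b)) l := by simp [List.countP_cons]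
      rw [h0, ihl, if_neg hnotmem, if_pos List.mem_cons_self, List.length_cons]
      omega
    · have h1 : List.countP (fun c => decide (c ≠ a)) (b :: l)
          = List.countP (fun c => decide (c ≠ a)) l + 1 := by
        simp [List.countP_cons, hb]
      rw [h1, ihl]
      by_cases hm : a ∈ l
      · have : 1 ≤ l.length := List.length_pos_iff.2 (List.ne_nil_of_mem hm)
        simp only [List.mem_cons, hm, or_true, if_true, if_pos hm, List.length_cons]
        omega
      · have : a ∉ b :: l := by simp [hm, Ne.symm hb]
        rw [if_neg hm, if_neg this, List.length_cons]

lemma assemble (n : ℕ) (st : Polyform n → Polyform n) (hst : IsConjugation n st)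
    (L : List (Fin (2*n))) (A : Fin (2*n)) (ψ : Polyform n) (c : ℂ)
    (hc : (if (A:ℕ) < n then (1:ℂ) else -1)
      * (-1)^(L.countP (fun B => decide (B ≠ A))) = c) :
    ((L.map (Gam n)).prod) (st (Gam n A ψ))
      = c • Gam n A (((L.map (Gam n)).prod) (st ψ)) := by
  have h2 : ((L.map (Gam n)).prod) (Gam n A (st ψ))
      = ((-1:ℂ)^(L.countP (fun B => decide (B ≠ A))))
        • Gam n A (((L.map (Gam n)).prod) (st ψ)) := by
    calc ((L.map (Gam n)).prod) (Gam n A (st ψ))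
        = ((L.map (Gam n)).prod * Gam n A) (st ψ) := rfl
      _ = (((-1:ℂ)^(L.countP (fun B => decide (B ≠ A))))
            • (Gam n A * (L.map (Gam n)).prod)) (st ψ) := by rw [prod_gam_comm n A L]
      _ = _ := rfl
  rw [st_gam hst, map_smul, h2, smul_smul, hc]

/-- `R ∘ Γ_A = (−1)^{n−1} Γ_A ∘ R` and `R' ∘ Γ_A = (−1)^n Γ_A ∘ R'` for all `A`. -/
theorem Rop_Rop'_commutation (n : ℕ) (hn : 1 ≤ n) (st : Polyform n → Polyform n)
    (hst : IsConjugation n st) (A : Fin (2 * n)) (ψ : Polyform n) :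
    Rop n st (Gam n A ψ) = ((-1 : ℂ) ^ (n - 1)) • Gam n A (Rop n st ψ) ∧
    Rop' n st (Gam n A ψ) = ((-1 : ℂ) ^ n) • Gam n A (Rop' n st ψ) := by
  constructor
  · have hle : n ≤ 2*n := by omega
    have hL : ((List.finRange n).map fun i => Gam n (Fin.castLE (by omega) i))
        = ((List.finRange n).map (Fin.castLE hle)).map (Gam n) := by
      rw [List.map_map]; rfl
    set L : List (Fin (2*n)) := (List.finRange n).map (Fin.castLE hle) with hLdef
    have hnd : L.Nodup := by
      refine (List.nodup_finRange n).map ?_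
      intro a b hab
      have := congrArg Fin.val hab
      simp only [Fin.coe_castLE] at this
      exact Fin.ext this
    have hlen : L.length = n := by simp [hLdef]
    have hmem : A ∈ L ↔ (A:ℕ) < n := by
      constructor
      · intro h
        obtain ⟨i, -, rfl⟩ := List.mem_map.1 h
        simpa using i.isLt
      · intro h
        exact List.mem_map.2 ⟨⟨A, h⟩, List.mem_finRange _, Fin.ext (by simp)⟩
    have hcnt : L.countP (fun B => decide (B ≠ A)) = if (A:ℕ) < n then n - 1 else n := by
      rw [countP_ne A L hnd]
      by_cases hA : (A:ℕ) < n
      · rw [if_pos (hmem.2 hA), if_pos hA, hlen]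
      · rw [if_neg (fun h => hA (hmem.1 h)), if_neg hA, hlen]
    show ((List.finRange n).map fun i => Gam n (Fin.castLE (by omega) i)).prod (st (Gam n A ψ))
      = ((-1 : ℂ) ^ (n - 1)) • Gam n A
        ((((List.finRange n).map fun i => Gam n (Fin.castLE (by omega) i)).prod) (st ψ))
    rw [hL]
    refine assemble n st hst L A ψ _ ?_
    rw [hcnt]
    by_cases hA : (A:ℕ) < n
    · rw [if_pos hA, if_pos hA, one_mul]
    · rw [if_neg hA, if_neg hA]
      have h1 : (-1:ℂ)^n = (-1)^(n-1) * (-1)^1 := by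
        rw [← pow_add]; congr 1; omega
      rw [h1]; ring
  · have hL : ((List.finRange n).map fun i => Gam n ⟨n + i.1, by have := i.2; omega⟩)
        = ((List.finRange n).map
            (fun i : Fin n => (⟨n + i.1, by have := i.2; omega⟩ : Fin (2*n)))).map (Gam n) := by
      rw [List.map_map]; rfl
    set L : List (Fin (2*n)) :=
      (List.finRange n).map
        (fun i : Fin n => (⟨n + i.1, by have := i.2; omega⟩ : Fin (2*n))) with hLdef
    have hnd : L.Nodup := by
      refine (List.nodup_finRange n).map ?_
      intro a b hab
      have := congrArg Fin.val hab
      simp only at this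
      exact Fin.ext (by omega)
    have hlen : L.length = n := by simp [hLdef]
    have hmem : A ∈ L ↔ ¬ (A:ℕ) < n := by
      constructor
      · intro h
        obtain ⟨i, -, rfl⟩ := List.mem_map.1 h
        simp
      · intro h
        refine List.mem_map.2 ⟨⟨(A:ℕ) - n, by have := A.isLt; omega⟩, List.mem_finRange _,
          Fin.ext ?_⟩
        have := A.isLt
        simp only
        omega
    have hcnt : L.countP (fun B => decide (B ≠ A)) = if (A:ℕ) < n then n else n - 1 := by
      rw [countP_ne A L hnd]
      by_cases hA : (A:ℕ) < n
      · rw [if_neg (fun h => (hmem.1 h) hA), if_pos hA, hlen]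
      · rw [if_pos (hmem.2 hA), if_neg hA, hlen]
    show ((List.finRange n).map fun i => Gam n ⟨n + i.1, by have := i.2; omega⟩).prod
        (st (Gam n A ψ))
      = ((-1 : ℂ) ^ n) • Gam n A
        ((((List.finRange n).map fun i => Gam n ⟨n + i.1, by have := i.2; omega⟩).prod) (st ψ))
    rw [hL]
    refine assemble n st hst L A ψ _ ?_
    rw [hcnt]
    by_cases hA : (A:ℕ) < n
    · rw [if_pos hA, if_pos hA, one_mul]
    · rw [if_neg hA, if_neg hA]
      have h1 : (-1:ℂ)^n = (-1)^(n-1) * (-1)^1 := by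
        rw [← pow_add]; congr 1; omega
      rw [h1]; ring
end

section
/- In the polyform model of Cl(2n) on S = ⋀ℂⁿ, the antilinear operators R := Γ₁ ∘ … ∘ Γ_n ∘ ∗ and R' := Γ_{n+1} ∘ … ∘ Γ_{2n} ∘ ∗ satisfy R² = (−1)^{n(n−1)/2} · id_S and (R')² = (−1)^{n(n+1)/2} · id_S. -/
set_option maxHeartbeats 1000000
set_option linter.unusedVariables false


noncomputable def Mz (n : ℕ) : Submodule ℤ (Polyform n) :=
  Submodule.span ℤ (Set.range (basisMonomial n))

section Aux

variable (n : ℕ)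

lemma crea_apply (i : Fin n) (x : Polyform n) :
    crea n i x = CliffordAlgebra.ι (0 : QuadraticForm ℂ (Fin n → ℂ)) (Pi.single i 1) * x := rfl

lemma anni_apply (i : Fin n) (x : Polyform n) :
    anni n i x = CliffordAlgebra.contractLeft (Q := (0 : QuadraticForm ℂ (Fin n → ℂ)))
      (LinearMap.proj i) x := rfl

lemma cc (i j : Fin n) : crea n i * crea n j + crea n j * crea n i = 0 := by
  refine LinearMap.ext fun x => ?_
  simp only [LinearMap.add_apply, Module.End.mul_apply, crea_apply, LinearMap.zero_apply,
    ← mul_assoc, ← add_mul]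
  rw [show (CliffordAlgebra.ι (0 : QuadraticForm ℂ (Fin n → ℂ)) (Pi.single i 1) *
      CliffordAlgebra.ι 0 (Pi.single j 1) +
      CliffordAlgebra.ι 0 (Pi.single j 1) * CliffordAlgebra.ι 0 (Pi.single i 1)) = 0 from
    ExteriorAlgebra.ι_add_mul_swap _ _, zero_mul]

lemma aa (i j : Fin n) : anni n i * anni n j + anni n j * anni n i = 0 := by
  refine LinearMap.ext fun x => ?_
  simp only [LinearMap.add_apply, Module.End.mul_apply, anni, LinearMap.zero_apply]
  rw [CliffordAlgebra.contractLeft_comm]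
  exact neg_add_cancel _

lemma ac (i j : Fin n) :
    anni n i * crea n j + crea n j * anni n i = (if i = j then (1:ℂ) else 0) • 1 := by
  refine LinearMap.ext fun x => ?_
  simp only [LinearMap.add_apply, Module.End.mul_apply, anni, crea_apply, LinearMap.smul_apply,
    Module.End.one_apply]
  rw [CliffordAlgebra.contractLeft_ι_mul]
  have : (LinearMap.proj i : (Fin n → ℂ) →ₗ[ℂ] ℂ) (Pi.single j 1) = if i = j then 1 else 0 := by
    simp [Pi.single_apply]
  rw [this]
  abel

lemma c_sq (i : Fin n) : crea n i * crea n i = 0 := by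
  refine LinearMap.ext fun x => ?_
  simp only [Module.End.mul_apply, crea_apply, LinearMap.zero_apply, ← mul_assoc]
  rw [show CliffordAlgebra.ι (0 : QuadraticForm ℂ (Fin n → ℂ)) (Pi.single i 1) *
      CliffordAlgebra.ι 0 (Pi.single i 1) = 0 from ExteriorAlgebra.ι_sq_zero _, zero_mul]

lemma a_sq (i : Fin n) : anni n i * anni n i = 0 := by
  refine LinearMap.ext fun x => ?_
  simp only [Module.End.mul_apply, anni, LinearMap.zero_apply]
  exact CliffordAlgebra.contractLeft_contractLeft _ _

lemma Gam_anticomm (A B : Fin (2 * n)) :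
    Gam n A * Gam n B + Gam n B * Gam n A = (if A = B then (2:ℂ) else 0) • 1 := by
  unfold Gam
  by_cases hA : (A:ℕ) < n <;> by_cases hB : (B:ℕ) < n
  · rw [dif_pos hA, dif_pos hB]
    set i : Fin n := ⟨A, hA⟩
    set j : Fin n := ⟨B, hB⟩
    have expand : (crea n i + anni n i) * (crea n j + anni n j) +
        (crea n j + anni n j) * (crea n i + anni n i) =
        ((crea n i * crea n j + crea n j * crea n i) +
          (anni n i * anni n j + anni n j * anni n i)) +
        ((anni n i * crea n j + crea n j * anni n i) +
          (anni n j * crea n i + crea n i * anni n j)) := by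
        simp only [mul_add, add_mul, mul_sub, sub_mul]; abel
    rw [expand, cc, aa, ac, ac]
    have hij : (i = j) ↔ (A = B) := by simp [i, j, Fin.ext_iff]
    rcases eq_or_ne A B with h | h
    · simp [hij.mpr h, h, two_smul]
    · have h1 : i ≠ j := fun e => h (hij.mp e)
      simp [if_neg h1, if_neg (Ne.symm h1), if_neg h]
  · rw [dif_pos hA, dif_neg hB]
    have hAB : A ≠ B := fun e => hB (e ▸ hA)
    set i : Fin n := ⟨A, hA⟩
    set j : Fin n := ⟨(B:ℕ) - n, by have := B.isLt; omega⟩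
    rw [mul_smul_comm, smul_mul_assoc, ← smul_add]
    have expand : (crea n i + anni n i) * (crea n j - anni n j) +
        (crea n j - anni n j) * (crea n i + anni n i) =
        ((crea n i * crea n j + crea n j * crea n i) -
          (anni n i * anni n j + anni n j * anni n i)) +
        ((anni n i * crea n j + crea n j * anni n i) -
          (anni n j * crea n i + crea n i * anni n j)) := by
        simp only [mul_add, add_mul, mul_sub, sub_mul]; abel
    rw [expand, cc, aa, ac, ac, if_neg hAB]
    by_cases hij : i = j
    · rw [if_pos hij, if_pos hij.symm]; simp
    · rw [if_neg hij, if_neg (Ne.symm hij)]; simp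
  · rw [dif_neg hA, dif_pos hB]
    have hAB : A ≠ B := fun e => hA (e ▸ hB)
    set i : Fin n := ⟨(A:ℕ) - n, by have := A.isLt; omega⟩
    set j : Fin n := ⟨B, hB⟩
    rw [mul_smul_comm, smul_mul_assoc, ← smul_add]
    have expand : (crea n i - anni n i) * (crea n j + anni n j) +
        (crea n j + anni n j) * (crea n i - anni n i) =
        ((crea n i * crea n j + crea n j * crea n i) -
          (anni n i * anni n j + anni n j * anni n i)) +
        ((anni n j * crea n i + crea n i * anni n j) -
          (anni n i * crea n j + crea n j * anni n i)) := by
        simp only [mul_add, add_mul, mul_sub, sub_mul]; abel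
    rw [expand, cc, aa, ac, ac, if_neg hAB]
    by_cases hij : i = j
    · rw [if_pos hij, if_pos hij.symm]; simp
    · rw [if_neg hij, if_neg (Ne.symm hij)]; simp
  · rw [dif_neg hA, dif_neg hB]
    set i : Fin n := ⟨(A:ℕ) - n, by have := A.isLt; omega⟩
    set j : Fin n := ⟨(B:ℕ) - n, by have := B.isLt; omega⟩
    rw [smul_mul_smul_comm, smul_mul_smul_comm, Complex.I_mul_I, ← smul_add]
    have expand : (crea n i - anni n i) * (crea n j - anni n j) +
        (crea n j - anni n j) * (crea n i - anni n i) =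
        ((crea n i * crea n j + crea n j * crea n i) +
          (anni n i * anni n j + anni n j * anni n i)) -
        ((anni n i * crea n j + crea n j * anni n i) +
          (anni n j * crea n i + crea n i * anni n j)) := by
        simp only [mul_add, add_mul, mul_sub, sub_mul]; abel
    rw [expand, cc, aa, ac, ac]
    have hij : (i = j) ↔ (A = B) := by
      rw [Fin.ext_iff, Fin.ext_iff]
      simp only [i, j]
      omega
    rcases eq_or_ne A B with h | h
    · simp [hij.mpr h, h, two_smul]
    · have h1 : i ≠ j := fun e => h (hij.mp e)
      simp [if_neg h1, if_neg (Ne.symm h1), if_neg h]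

lemma Gam_sq (A : Fin (2 * n)) : Gam n A * Gam n A = 1 := by
  have h := Gam_anticomm n A A
  rw [if_pos rfl] at h
  rw [← two_smul ℂ (Gam n A * Gam n A)] at h
  exact smul_right_injective _ two_ne_zero h

lemma Gam_anti {A B : Fin (2 * n)} (h : A ≠ B) :
    Gam n A * Gam n B = -(Gam n B * Gam n A) := by
  have hh := Gam_anticomm n A B
  rw [if_neg h, zero_smul] at hh
  exact eq_neg_of_add_eq_zero_left hh

lemma prod_mul_single (l : List (Fin (2 * n))) (A : Fin (2 * n)) (hA : A ∉ l) :
    (l.map (Gam n)).prod * Gam n A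
      = ((-1:ℂ) ^ l.length) • (Gam n A * (l.map (Gam n)).prod) := by
  induction l with
  | nil => simp
  | cons b l ih =>
      have hbA : b ≠ A := fun e => hA (e ▸ List.mem_cons_self (a := b) (l := l))
      have hA' : A ∉ l := fun h => hA (List.mem_cons_of_mem _ h)
      rw [List.map_cons, List.prod_cons, List.length_cons]
      calc Gam n b * (l.map (Gam n)).prod * Gam n A
          = Gam n b * ((l.map (Gam n)).prod * Gam n A) := by rw [mul_assoc]
        _ = Gam n b * (((-1:ℂ) ^ l.length) • (Gam n A * (l.map (Gam n)).prod)) := by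
            rw [ih hA']
        _ = ((-1:ℂ) ^ l.length) • (-(Gam n A * Gam n b) * (l.map (Gam n)).prod) := by
            rw [mul_smul_comm, ← mul_assoc, Gam_anti n hbA]
        _ = ((-1:ℂ) ^ (l.length + 1)) • (Gam n A * (Gam n b * (l.map (Gam n)).prod)) := by
            rw [show -(Gam n A * Gam n b) * (l.map (Gam n)).prod
                = -(Gam n A * Gam n b * (l.map (Gam n)).prod) from LinearMap.ext fun _ => rfl,
              mul_assoc, smul_neg, pow_succ, mul_neg_one]
            exact (neg_smul _ _).symm

lemma prod_sq (l : List (Fin (2 * n))) (hl : l.Nodup) :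
    (l.map (Gam n)).prod * (l.map (Gam n)).prod
      = ((-1:ℂ) ^ (l.length * (l.length - 1) / 2)) • 1 := by
  induction l with
  | nil => simp
  | cons b l ih =>
      have hbl : b ∉ l := (List.nodup_cons.mp hl).1
      have hnd : l.Nodup := (List.nodup_cons.mp hl).2
      set k := l.length with hk
      have harith : k + k * (k - 1) / 2 = (k + 1) * k / 2 := by
        have h2 : (k + 1) * k = k * (k - 1) + 2 * k := by
          cases k with
          | zero => simp
          | succ m => simp only [Nat.add_sub_cancel]; ring
        have he : Even (k * (k - 1)) := by
          cases k with
          | zero => simp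
          | succ m => simpa [Nat.mul_comm] using Nat.even_mul_succ_self m
        obtain ⟨m, hm⟩ := he
        omega
      rw [List.map_cons, List.prod_cons, List.length_cons]
      calc Gam n b * (l.map (Gam n)).prod * (Gam n b * (l.map (Gam n)).prod)
          = Gam n b * ((l.map (Gam n)).prod * Gam n b) * (l.map (Gam n)).prod := by
            noncomm_ring
        _ = Gam n b * (((-1:ℂ) ^ k) • (Gam n b * (l.map (Gam n)).prod)) * (l.map (Gam n)).prod := by
            rw [prod_mul_single n l b hbl]
        _ = ((-1:ℂ) ^ k) • (Gam n b * Gam n b * ((l.map (Gam n)).prod * (l.map (Gam n)).prod)) := by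
            rw [mul_smul_comm, smul_mul_assoc]; noncomm_ring
        _ = ((-1:ℂ) ^ k) • ((((-1:ℂ) ^ (k * (k - 1) / 2)) • 1)) := by
            rw [Gam_sq, ih hnd, one_mul]
        _ = ((-1:ℂ) ^ ((k + 1) * (k + 1 - 1) / 2)) • 1 := by
            rw [smul_smul, ← pow_add, Nat.add_sub_cancel, harith]

lemma basisMonomial_nil : basisMonomial n [] = 1 := rfl

lemma basisMonomial_cons (i : Fin n) (l : List (Fin n)) :
    basisMonomial n (i :: l) = crea n i (basisMonomial n l) := by
  simp [basisMonomial, crea, List.map_cons, List.prod_cons]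

lemma basisMonomial_append (l l' : List (Fin n)) :
    basisMonomial n (l ++ l') = basisMonomial n l * basisMonomial n l' := by
  simp [basisMonomial, List.map_append, List.prod_append]

lemma basisMonomial_mem (l : List (Fin n)) : basisMonomial n l ∈ Mz n :=
  Submodule.subset_span ⟨l, rfl⟩

lemma crea_mem (i : Fin n) {x : Polyform n} (hx : x ∈ Mz n) : crea n i x ∈ Mz n := by
  induction hx using Submodule.span_induction with
  | mem y hy => obtain ⟨l, rfl⟩ := hy; rw [← basisMonomial_cons]; exact basisMonomial_mem n _
  | zero => rw [map_zero]; exact zero_mem _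
  | add x y hx hy ihx ihy => rw [map_add]; exact add_mem ihx ihy
  | smul z x hx ih => rw [map_zsmul]; exact Submodule.smul_mem _ _ ih

lemma anni_basisMonomial_mem (i : Fin n) (l : List (Fin n)) :
    anni n i (basisMonomial n l) ∈ Mz n := by
  induction l with
  | nil =>
      rw [basisMonomial_nil, anni_apply, CliffordAlgebra.contractLeft_one]
      exact zero_mem _
  | cons j l ih =>
      rw [basisMonomial_cons, anni_apply, crea_apply,
        CliffordAlgebra.contractLeft_ι_mul, ← crea_apply, ← anni_apply]
      refine sub_mem ?_ (crea_mem n j ih)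
      have : (LinearMap.proj i : (Fin n → ℂ) →ₗ[ℂ] ℂ) (Pi.single j 1)
          = if i = j then (1:ℂ) else 0 := by simp [Pi.single_apply, eq_comm]
      rw [this]
      by_cases h : i = j
      · rw [if_pos h, one_smul]; exact basisMonomial_mem n l
      · rw [if_neg h, zero_smul]; exact zero_mem _

lemma anni_mem (i : Fin n) {x : Polyform n} (hx : x ∈ Mz n) : anni n i x ∈ Mz n := by
  induction hx using Submodule.span_induction with
  | mem y hy => obtain ⟨l, rfl⟩ := hy; exact anni_basisMonomial_mem n i l
  | zero => rw [map_zero]; exact zero_mem _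
  | add x y hx hy ihx ihy => rw [map_add]; exact add_mem ihx ihy
  | smul z x hx ih => rw [map_zsmul]; exact Submodule.smul_mem _ _ ih

variable {st : Polyform n → Polyform n}

lemma st_zero_s8 (hst : IsConjugation n st) : st 0 = 0 :=
  (AddMonoidHom.mk' st hst.1).map_zero

lemma st_fix (hst : IsConjugation n st) {x : Polyform n} (hx : x ∈ Mz n) : st x = x := by
  induction hx using Submodule.span_induction with
  | mem y hy => obtain ⟨l, rfl⟩ := hy; exact hst.2.2 l
  | zero => exact st_zero_s8 n hst
  | add x y hx hy ihx ihy => rw [hst.1, ihx, ihy]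
  | smul z x hx ih =>
      have : st (z • x) = z • st x := (AddMonoidHom.mk' st hst.1).map_zsmul z x
      rw [this, ih]

lemma span_top : Submodule.span ℂ (Set.range (basisMonomial n)) = ⊤ := by
  rw [eq_top_iff]
  rintro x -
  induction x using CliffordAlgebra.induction with
  | algebraMap r =>
      rw [Algebra.algebraMap_eq_smul_one]
      exact Submodule.smul_mem _ _ (Submodule.subset_span ⟨[], rfl⟩)
  | ι v =>
      have hv : v = ∑ i, v i • (Pi.single i 1 : Fin n → ℂ) := by
        funext j
        simp [Pi.single_apply, Finset.sum_ite_eq', eq_comm]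
      rw [hv, map_sum]
      refine Submodule.sum_mem _ fun i _ => ?_
      rw [map_smul]
      refine Submodule.smul_mem _ _ (Submodule.subset_span ⟨[i], ?_⟩)
      simp [basisMonomial]
  | mul a b ha hb =>
      have h := Submodule.mul_mem_mul ha hb
      rw [Submodule.span_mul_span] at h
      refine Submodule.span_le.mpr ?_ h
      rintro _ ⟨x, ⟨l, rfl⟩, y, ⟨l', rfl⟩, rfl⟩
      exact Submodule.subset_span ⟨l ++ l', by rw [basisMonomial_append]⟩
  | add a b ha hb => exact add_mem ha hb

lemma mem_span_top (x : Polyform n) : x ∈ Submodule.span ℂ (Set.range (basisMonomial n)) := by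
  rw [span_top]; trivial

lemma st_st (hst : IsConjugation n st) (x : Polyform n) : st (st x) = x := by
  induction mem_span_top n x using Submodule.span_induction with
  | mem y hy => obtain ⟨l, rfl⟩ := hy; rw [hst.2.2, hst.2.2]
  | zero => rw [st_zero_s8 n hst, st_zero_s8 n hst]
  | add x y hx hy ihx ihy => rw [hst.1, hst.1, ihx, ihy]
  | smul z x hx ih => rw [hst.2.1, hst.2.1, ih, Complex.conj_conj]

lemma st_low (hst : IsConjugation n st) (i : Fin n) (x : Polyform n) :
    st ((crea n i + anni n i) x) = (crea n i + anni n i) (st x) := by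
  induction mem_span_top n x using Submodule.span_induction with
  | mem y hy =>
      obtain ⟨l, rfl⟩ := hy
      rw [hst.2.2]
      refine st_fix n hst ?_
      rw [LinearMap.add_apply]
      exact add_mem (crea_mem n i (basisMonomial_mem n l)) (anni_basisMonomial_mem n i l)
  | zero => simp [st_zero_s8 n hst]
  | add x y hx hy ihx ihy => rw [map_add, hst.1, ihx, ihy, hst.1, map_add]
  | smul z x hx ih => rw [map_smul, hst.2.1, ih, hst.2.1, map_smul]

lemma st_high (hst : IsConjugation n st) (i : Fin n) (x : Polyform n) :
    st ((Complex.I • (crea n i - anni n i)) x)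
      = -((Complex.I • (crea n i - anni n i)) (st x)) := by
  induction mem_span_top n x using Submodule.span_induction with
  | mem y hy =>
      obtain ⟨l, rfl⟩ := hy
      rw [hst.2.2]
      have hmem : (crea n i - anni n i) (basisMonomial n l) ∈ Mz n := by
        rw [LinearMap.sub_apply]
        exact sub_mem (crea_mem n i (basisMonomial_mem n l)) (anni_basisMonomial_mem n i l)
      rw [LinearMap.smul_apply, hst.2.1, st_fix n hst hmem]
      simp [Complex.conj_I]
  | zero => simp [st_zero_s8 n hst]
  | add x y hx hy ihx ihy =>
      rw [map_add, hst.1, ihx, ihy, hst.1, map_add, neg_add]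
  | smul z x hx ih => rw [map_smul, hst.2.1, ih, hst.2.1, map_smul, smul_neg]

lemma Gam_castLE (h : n ≤ 2 * n) (i : Fin n) :
    Gam n (Fin.castLE h i) = crea n i + anni n i := by
  rw [Gam, dif_pos (show ((Fin.castLE h i : Fin (2 * n)) : ℕ) < n from i.isLt)]
  rfl

lemma Gam_add (i : Fin n) (h : n + i.1 < 2 * n) :
    Gam n ⟨n + i.1, h⟩ = Complex.I • (crea n i - anni n i) := by
  rw [Gam, dif_neg (show ¬((⟨n + i.1, h⟩ : Fin (2 * n)) : ℕ) < n by simp)]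
  have e : ∀ hh : n + i.1 - n < n, (⟨n + i.1 - n, hh⟩ : Fin n) = i :=
    fun hh => Fin.ext (by simp)
  rw [show (⟨(⟨n + i.1, h⟩ : Fin (2*n)).1 - n, by omega⟩ : Fin n) = i from Fin.ext (by simp)]

lemma st_prod_low (hst : IsConjugation n st) (l : List (Fin n)) (x : Polyform n) :
    st (((l.map fun i => Gam n (Fin.castLE (by omega : n ≤ 2 * n) i)).prod) x)
      = ((l.map fun i => Gam n (Fin.castLE (by omega : n ≤ 2 * n) i)).prod) (st x) := by
  induction l with
  | nil => simp
  | cons i l ih =>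
      rw [List.map_cons, List.prod_cons, Module.End.mul_apply, Module.End.mul_apply,
        Gam_castLE, st_low n hst, ih]

lemma st_prod_high (hst : IsConjugation n st) (l : List (Fin n)) (x : Polyform n) :
    st (((l.map fun i => Gam n ⟨n + i.1, by have := i.2; omega⟩).prod) x)
      = ((-1:ℂ) ^ l.length) •
        ((l.map fun i => Gam n ⟨n + i.1, by have := i.2; omega⟩).prod) (st x) := by
  induction l with
  | nil => simp
  | cons i l ih =>
      rw [List.map_cons, List.prod_cons, Module.End.mul_apply, Module.End.mul_apply,
        List.length_cons, Gam_add, st_high n hst, ih, map_smul, pow_succ, mul_neg_one, neg_smul]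

lemma arith2 (k : ℕ) : k + k * (k - 1) / 2 = k * (k + 1) / 2 := by
  have h2 : k * (k + 1) = k * (k - 1) + 2 * k := by
    cases k with
    | zero => simp
    | succ m => simp only [Nat.add_sub_cancel]; ring
  have he : Even (k * (k - 1)) := by
    cases k with
    | zero => simp
    | succ m => simpa [Nat.mul_comm] using Nat.even_mul_succ_self m
  obtain ⟨m, hm⟩ := he
  omega

lemma P_sq_low :
    (((List.finRange n).map fun i => Gam n (Fin.castLE (by omega : n ≤ 2 * n) i)).prod) *
      (((List.finRange n).map fun i => Gam n (Fin.castLE (by omega : n ≤ 2 * n) i)).prod)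
      = ((-1:ℂ) ^ (n * (n - 1) / 2)) • 1 := by
  have h1 : ((List.finRange n).map fun i => Gam n (Fin.castLE (by omega : n ≤ 2 * n) i))
      = (((List.finRange n).map (Fin.castLE (by omega : n ≤ 2 * n))).map (Gam n)) := by
    rw [List.map_map]; rfl
  have hnd : (((List.finRange n).map (Fin.castLE (by omega : n ≤ 2 * n)))).Nodup :=
    (List.nodup_finRange n).map (Fin.castLE_injective _)
  rw [h1, prod_sq n _ hnd]
  simp

lemma P_sq_high :
    (((List.finRange n).map fun i => Gam n ⟨n + i.1, by have := i.2; omega⟩).prod) *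
      (((List.finRange n).map fun i => Gam n ⟨n + i.1, by have := i.2; omega⟩).prod)
      = ((-1:ℂ) ^ (n * (n - 1) / 2)) • 1 := by
  have hinj : Function.Injective
      (fun i : Fin n => (⟨n + i.1, by have := i.2; omega⟩ : Fin (2 * n))) := by
    intro a b h
    have : n + a.1 = n + b.1 := congrArg Fin.val h
    exact Fin.ext (by omega)
  have h1 : ((List.finRange n).map fun i => Gam n ⟨n + i.1, by have := i.2; omega⟩)
      = (((List.finRange n).map
          (fun i : Fin n => (⟨n + i.1, by have := i.2; omega⟩ : Fin (2 * n)))).map (Gam n)) := by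
    rw [List.map_map]; rfl
  have hnd := (List.nodup_finRange n).map hinj
  rw [h1, prod_sq n _ hnd]
  simp

end Aux

/-- `R² = (−1)^{n(n−1)/2} id` and `(R')² = (−1)^{n(n+1)/2} id`. -/
theorem Rop_Rop'_sq (n : ℕ) (hn : 1 ≤ n) (st : Polyform n → Polyform n)
    (hst : IsConjugation n st) (ψ : Polyform n) :
    Rop n st (Rop n st ψ) = ((-1 : ℂ) ^ (n * (n - 1) / 2)) • ψ ∧
    Rop' n st (Rop' n st ψ) = ((-1 : ℂ) ^ (n * (n + 1) / 2)) • ψ := by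
  constructor
  · unfold Rop
    rw [st_prod_low n hst, st_st n hst, ← Module.End.mul_apply, P_sq_low]
    simp
  · unfold Rop'
    rw [st_prod_high n hst, st_st n hst, map_smul, ← Module.End.mul_apply, P_sq_high]
    rw [List.length_finRange, LinearMap.smul_apply, Module.End.one_apply,
      smul_smul, ← pow_add, arith2]
end
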